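/- arXiv:2405.08532 — 10 statements merged into one kernel-verified Lean document; each statement's English description precedes it below -/
import Mathlib

section
/- For any sequence u over a finite alphabet A whose letters admit frequencies α = (α_i)_{i∈A}, the balance constant B_u and the discrepancy Δ_α(u) satisfy Δ_α(u) ≤ B_u ≤ 4·Δ_α(u), where B_u = max over letters i of the supremum of |w|_i − |w'|_i over pairs of factors w, w' of u of equal length, and Δ_α(u) = sup_n max_i |(number of occurrences of i in u_0…u_{n−1}) − n·α_i|. -/
open scoped ENNReal

/-- Number of occurrences of the letter `i` in the factor `u_{[a, a+n)}`. -/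
def nbOcc {A : Type*} [DecidableEq A] (u : ℕ → A) (i : A) (a n : ℕ) : ℕ :=
  ((Finset.Ico a (a + n)).filter fun k => u k = i).card

/-- Letter discrepancy `Δ_α(u)` (possibly infinite). -/
noncomputable def discrepancy {A : Type*} [DecidableEq A] (u : ℕ → A) (α : A → ℝ) : ℝ≥0∞ :=
  ⨆ n : ℕ, ⨆ i : A, ENNReal.ofReal |(nbOcc u i 0 n : ℝ) - n * α i|

/-- Balance constant `B_u` (possibly infinite). -/
noncomputable def balanceConst {A : Type*} [DecidableEq A] (u : ℕ → A) : ℝ≥0∞ :=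
  ⨆ i : A, ⨆ a : ℕ, ⨆ b : ℕ, ⨆ n : ℕ,
    ENNReal.ofReal ((nbOcc u i a n : ℝ) - (nbOcc u i b n : ℝ))

lemma nbOcc_add {A : Type*} [DecidableEq A] (u : ℕ → A) (i : A) (a m n : ℕ) :
    nbOcc u i a (m + n) = nbOcc u i a m + nbOcc u i (a + m) n := by
  unfold nbOcc
  rw [← Finset.card_union_of_disjoint, ← Finset.filter_union,
    show a + m + n = a + (m + n) by omega, Finset.Ico_union_Ico_eq_Ico (by omega) (by omega)]
  exact Finset.disjoint_filter_filter (Finset.Ico_disjoint_Ico_consecutive a (a + m) (a + m + n))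

lemma nbOcc_blocks {A : Type*} [DecidableEq A] (u : ℕ → A) (i : A) (n : ℕ) :
    ∀ k : ℕ, nbOcc u i 0 (k * n) = ∑ j ∈ Finset.range k, nbOcc u i (j * n) n := by
  intro k
  induction k with
  | zero => simp [nbOcc]
  | succ k ih =>
    rw [Finset.sum_range_succ, ← ih, show (k + 1) * n = k * n + n by ring,
      nbOcc_add u i 0 (k * n) n, Nat.zero_add]

lemma nbOcc_split {A : Type*} [DecidableEq A] (u : ℕ → A) (i : A) (a n : ℕ) :
    (nbOcc u i a n : ℝ) = (nbOcc u i 0 (a + n) : ℝ) - (nbOcc u i 0 a : ℝ) := by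
  have := nbOcc_add u i 0 a n
  rw [Nat.zero_add] at this
  rw [this]; push_cast; ring

theorem discrepancy_le_balance_le_four_mul_discrepancy
    {A : Type*} [Fintype A] [DecidableEq A] [Nonempty A] (u : ℕ → A) (α : A → ℝ)
    (hfreq : ∀ i : A,
      Filter.Tendsto (fun n : ℕ => (nbOcc u i 0 n : ℝ) / n) Filter.atTop (nhds (α i))) :
    discrepancy u α ≤ balanceConst u ∧ balanceConst u ≤ 4 * discrepancy u α := by
  constructor
  · -- Δ ≤ B
    rcases eq_or_ne (balanceConst u) ⊤ with hB | hB
    · simp [hB]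
    apply iSup_le; intro n; apply iSup_le; intro i
    set C := (balanceConst u).toReal with hCdef
    have hC0 : 0 ≤ C := ENNReal.toReal_nonneg
    have hbound : ∀ a b m : ℕ, (nbOcc u i a m : ℝ) - (nbOcc u i b m : ℝ) ≤ C := by
      intro a b m
      have h1 : ENNReal.ofReal ((nbOcc u i a m : ℝ) - (nbOcc u i b m : ℝ)) ≤ balanceConst u := by
        apply le_iSup_of_le i; apply le_iSup_of_le a; apply le_iSup_of_le b
        exact le_iSup_of_le m le_rfl
      rcases le_or_gt ((nbOcc u i a m : ℝ) - (nbOcc u i b m : ℝ)) 0 with h | h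
      · linarith
      · have := ENNReal.toReal_mono hB h1
        rwa [ENNReal.toReal_ofReal h.le] at this
    suffices h : |(nbOcc u i 0 n : ℝ) - n * α i| ≤ C by
      exact ENNReal.ofReal_le_of_le_toReal h
    rcases Nat.eq_zero_or_pos n with rfl | hn
    · simp [nbOcc, hC0]
    have hnR : (0:ℝ) < n := by exact_mod_cast hn
    -- block inequality
    have hk1 : ∀ k : ℕ, |(nbOcc u i 0 (k * n) : ℝ) - k * (nbOcc u i 0 n : ℝ)| ≤ k * C := by
      intro k
      have hsum : (nbOcc u i 0 (k * n) : ℝ) = ∑ j ∈ Finset.range k, (nbOcc u i (j * n) n : ℝ) := by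
        rw [nbOcc_blocks]; push_cast; rfl
      rw [hsum, show (k : ℝ) * (nbOcc u i 0 n : ℝ)
          = ∑ _j ∈ Finset.range k, (nbOcc u i 0 n : ℝ) by
        rw [Finset.sum_const, Finset.card_range]; ring, ← Finset.sum_sub_distrib]
      calc |∑ j ∈ Finset.range k, ((nbOcc u i (j * n) n : ℝ) - (nbOcc u i 0 n : ℝ))|
          ≤ ∑ j ∈ Finset.range k, |(nbOcc u i (j * n) n : ℝ) - (nbOcc u i 0 n : ℝ)| :=
            Finset.abs_sum_le_sum_abs _ _
        _ ≤ ∑ _j ∈ Finset.range k, C := by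
            apply Finset.sum_le_sum; intro j _
            rw [abs_sub_le_iff]
            exact ⟨hbound _ _ _, hbound _ _ _⟩
        _ = k * C := by rw [Finset.sum_const, Finset.card_range]; ring
    have hk2 : ∀ k : ℕ, 1 ≤ k →
        |(nbOcc u i 0 (k * n) : ℝ) / (k * n) - (nbOcc u i 0 n : ℝ) / n| ≤ C / n := by
      intro k hk
      have hkR : (0:ℝ) < k := by exact_mod_cast hk
      have hknR : (0:ℝ) < (k : ℝ) * n := by positivity
      have heq : (nbOcc u i 0 (k * n) : ℝ) / (k * n) - (nbOcc u i 0 n : ℝ) / n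
          = ((nbOcc u i 0 (k * n) : ℝ) - k * (nbOcc u i 0 n : ℝ)) / (k * n) := by
        field_simp
      rw [heq, abs_div, abs_of_pos hknR]
      rw [div_le_div_iff₀ hknR hnR]
      calc |(nbOcc u i 0 (k * n) : ℝ) - k * (nbOcc u i 0 n : ℝ)| * n
          ≤ (k * C) * n := by
            apply mul_le_mul_of_nonneg_right (hk1 k) hnR.le
        _ = C * ((k:ℝ) * n) := by ring
    have hmul : Filter.Tendsto (fun k : ℕ => k * n) Filter.atTop Filter.atTop :=
      Filter.tendsto_atTop_atTop.mpr fun b => ⟨b, fun k hk =>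
        le_trans hk (Nat.le_mul_of_pos_right k hn)⟩
    have ht : Filter.Tendsto (fun k : ℕ => (nbOcc u i 0 (k * n) : ℝ) / ((k * n : ℕ) : ℝ))
        Filter.atTop (nhds (α i)) := (hfreq i).comp hmul
    have ht' : Filter.Tendsto (fun k : ℕ => (nbOcc u i 0 (k * n) : ℝ) / ((k : ℝ) * n))
        Filter.atTop (nhds (α i)) := by
      convert ht using 2 with k
      push_cast; ring
    have habs : Filter.Tendsto
        (fun k : ℕ => |(nbOcc u i 0 (k * n) : ℝ) / ((k : ℝ) * n) - (nbOcc u i 0 n : ℝ) / n|)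
        Filter.atTop (nhds (|α i - (nbOcc u i 0 n : ℝ) / n|)) :=
      ((ht'.sub_const _).abs)
    have hlim : |α i - (nbOcc u i 0 n : ℝ) / n| ≤ C / n :=
      le_of_tendsto habs (Filter.eventually_atTop.mpr ⟨1, hk2⟩)
    have : |(nbOcc u i 0 n : ℝ) - n * α i| = n * |α i - (nbOcc u i 0 n : ℝ) / n| := by
      rw [abs_sub_comm, ← abs_of_pos hnR, ← abs_mul]
      congr 1
      field_simp
      rw [abs_of_pos hnR]; ring
    rw [this]
    calc (n : ℝ) * |α i - (nbOcc u i 0 n : ℝ) / n| ≤ n * (C / n) :=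
          mul_le_mul_of_nonneg_left hlim hnR.le
      _ = C := by field_simp
  · -- B ≤ 4Δ
    apply iSup_le; intro i; apply iSup_le; intro a; apply iSup_le; intro b; apply iSup_le; intro n
    have hΔ : ∀ m : ℕ, ENNReal.ofReal |(nbOcc u i 0 m : ℝ) - m * α i| ≤ discrepancy u α := by
      intro m
      exact le_iSup_of_le m (le_iSup_of_le i le_rfl)
    set d : ℕ → ℝ := fun m => (nbOcc u i 0 m : ℝ) - m * α i with hd
    have key : (nbOcc u i a n : ℝ) - (nbOcc u i b n : ℝ)
        = d (a + n) - d a - (d (b + n) - d b) := by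
      rw [nbOcc_split u i a n, nbOcc_split u i b n, hd]
      push_cast; ring
    calc ENNReal.ofReal ((nbOcc u i a n : ℝ) - (nbOcc u i b n : ℝ))
        ≤ ENNReal.ofReal (|d (a + n)| + |d a| + |d (b + n)| + |d b|) := by
          apply ENNReal.ofReal_le_ofReal
          rw [key]
          calc d (a + n) - d a - (d (b + n) - d b)
              ≤ |d (a + n) - d a - (d (b + n) - d b)| := le_abs_self _
            _ ≤ |d (a + n)| + |d a| + |d (b + n)| + |d b| := by
                have := abs_sub (d (a+n) - d a) (d (b+n) - d b)
                have h2 := abs_sub (d (a+n)) (d a)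
                have h3 := abs_sub (d (b+n)) (d b)
                calc |d (a + n) - d a - (d (b + n) - d b)|
                    ≤ |d (a+n) - d a| + |d (b+n) - d b| := abs_sub _ _
                  _ ≤ (|d (a+n)| + |d a|) + (|d (b+n)| + |d b|) := add_le_add h2 h3
                  _ = _ := by ring
        _ ≤ ENNReal.ofReal |d (a + n)| + ENNReal.ofReal |d a| + ENNReal.ofReal |d (b + n)|
            + ENNReal.ofReal |d b| := by
          refine le_trans (ENNReal.ofReal_add_le) (add_le_add ?_ le_rfl)
          refine le_trans (ENNReal.ofReal_add_le) (add_le_add ?_ le_rfl)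
          exact ENNReal.ofReal_add_le
        _ ≤ discrepancy u α + discrepancy u α + discrepancy u α + discrepancy u α := by
          exact add_le_add (add_le_add (add_le_add (hΔ _) (hΔ _)) (hΔ _)) (hΔ _)
        _ = 4 * discrepancy u α := by ring
end

section
/- Let α = (α_1, α_2) ∈ (0,1)² be a frequency vector (α_1 + α_2 = 1) with α_1 irrational, and let u be a sequence over a two-letter alphabet with letter frequency vector α such that Δ_α(u) ≤ 1/2. Then u is 1-balanced, i.e., for every letter a and every pair of factors w, w' of u of equal length, ||w|_a − |w'|_a| ≤ 1. -/
theorem fairly_distributed_two_letters_is_one_balanced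
    (α : Fin 2 → ℝ) (hα : ∀ i, α i ∈ Set.Ioo (0:ℝ) 1) (hsum : ∑ i, α i = 1)
    (hirr : Irrational (α 0)) (u : ℕ → Fin 2)
    (hfreq : ∀ i : Fin 2,
      Filter.Tendsto
        (fun n : ℕ => (((Finset.range n).filter fun k => u k = i).card : ℝ) / n)
        Filter.atTop (nhds (α i)))
    (hdisc : ∀ (n : ℕ) (i : Fin 2),
      |(((Finset.range n).filter fun k => u k = i).card : ℝ) - n * α i| ≤ 1/2) :
    ∀ (a : Fin 2) (j k n : ℕ),
      |((((Finset.Ico j (j + n)).filter fun t => u t = a).card : ℤ)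
        - (((Finset.Ico k (k + n)).filter fun t => u t = a).card : ℤ))| ≤ 1 := by
  intro a j k n
  have hsum2 : α 0 + α 1 = 1 := by simpa [Fin.sum_univ_two] using hsum
  have hirr_a : Irrational (α a) := by
    fin_cases a
    · exact hirr
    · show Irrational (α 1)
      have h1 : α 1 = (1 : ℚ) - α 0 := by push_cast; linarith
      rw [h1]; exact Irrational.ratCast_sub 1 hirr
  set c : ℕ → ℕ := fun m => ((Finset.range m).filter fun t => u t = a).card with hc
  have hstrict : ∀ m : ℕ, |(c m : ℝ) - m * α a| < 1 / 2 := by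
    intro m
    rcases Nat.eq_zero_or_pos m with rfl | hm
    · simp [hc]
    · refine lt_of_le_of_ne (hdisc m a) ?_
      intro heq
      have hmirr : Irrational ((m : ℝ) * α a) := hirr_a.natCast_mul (by omega : m ≠ 0)
      rcases abs_eq (by norm_num : (0:ℝ) ≤ 1/2) |>.mp heq with h | h
      · exact hmirr ⟨(c m : ℚ) - 1/2, by push_cast; linarith⟩
      · exact hmirr ⟨(c m : ℚ) + 1/2, by push_cast; linarith⟩
  have hIco : ∀ p q : ℕ,
      (((Finset.Ico p (p + q)).filter fun t => u t = a).card : ℤ) = c (p + q) - c p := by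
    intro p q
    have hun : Finset.range p ∪ Finset.Ico p (p + q) = Finset.range (p + q) := by
      rw [Finset.range_eq_Ico]
      rw [Finset.range_eq_Ico]; exact Finset.Ico_union_Ico_eq_Ico (Nat.zero_le p) (Nat.le_add_right p q)
    have hdisj : Disjoint (Finset.range p) (Finset.Ico p (p + q)) := by
      rw [Finset.range_eq_Ico]
      exact Finset.Ico_disjoint_Ico_consecutive 0 p (p + q)
    have := Finset.card_union_of_disjoint
      (Finset.disjoint_filter_filter hdisj
        (p := fun t => u t = a) (q := fun t => u t = a))
    rw [← Finset.filter_union, hun] at this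
    simp only [hc]
    omega
  set A : ℤ := (((Finset.Ico j (j + n)).filter fun t => u t = a).card : ℤ)
  set B : ℤ := (((Finset.Ico k (k + n)).filter fun t => u t = a).card : ℤ)
  have hA : A = (c (j + n) : ℤ) - c j := hIco j n
  have hB : B = (c (k + n) : ℤ) - c k := hIco k n
  have hreal : |((A - B : ℤ) : ℝ)| < 2 := by
    have e1 := hstrict (j + n)
    have e2 := hstrict j
    have e3 := hstrict (k + n)
    have e4 := hstrict k
    have hABr : ((A - B : ℤ) : ℝ)
        = ((c (j + n) : ℝ) - (j + n) * α a) - ((c j : ℝ) - j * α a)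
          - (((c (k + n) : ℝ) - (k + n) * α a) - ((c k : ℝ) - k * α a)) := by
      rw [hA, hB]; push_cast; ring
    rw [hABr]
    rw [abs_lt] at e1 e2 e3 e4 ⊢
    push_cast at e1 e2 e3 e4
    constructor <;> linarith [e1.1, e1.2, e2.1, e2.2, e3.1, e3.2, e4.1, e4.2]
  have : |A - B| < 2 := by exact_mod_cast (by rwa [← Int.cast_abs] at hreal : ((|A - B| : ℤ) : ℝ) < 2)
  omega
end

section
/- Let α ∈ (0,1)^d be a frequency vector, π_α : ℝ^d → 1^⊥ the projection along ℝα onto the hyperplane 1^⊥ = {x : Σ x_i = 0} (so π_α(e_i) = e_i − α), and F_i = {x ∈ [0,1]^d : x_i = 1}. Then the union of the projections π_α(F_i) for i = 1,…,d equals π_α([0,1]^d). -/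
/-- Projection onto `1^⊥` along `ℝα` (for a frequency vector `α`): `π_α(x) = x - (Σ x_i) • α`,
so that `π_α(e_i) = e_i - α`. -/
noncomputable def piAlpha {d : ℕ} (α : Fin d → ℝ) (x : Fin d → ℝ) : Fin d → ℝ :=
  x - (∑ j, x j) • α

/-- Upper face of the unit cube in direction `i`. -/
def upperFace (d : ℕ) (i : Fin d) : Set (Fin d → ℝ) :=
  {x | x ∈ Set.Icc (0 : Fin d → ℝ) 1 ∧ x i = 1}

theorem union_proj_upperFaces_eq_proj_cube {d : ℕ} (hd : 2 ≤ d)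
    (α : Fin d → ℝ) (hα : ∀ i, α i ∈ Set.Ioo (0:ℝ) 1) (hsum : ∑ i, α i = 1) :
    (⋃ i : Fin d, piAlpha α '' upperFace d i)
      = piAlpha α '' Set.Icc (0 : Fin d → ℝ) 1 := by
  have hdpos : 0 < d := by omega
  apply Set.Subset.antisymm
  · refine Set.iUnion_subset fun i => Set.image_mono fun x hx => hx.1
  · rintro y ⟨x, hx, rfl⟩
    haveI : Nonempty (Fin d) := Fin.pos_iff_nonempty.1 hdpos
    have hne : (Finset.univ : Finset (Fin d)).Nonempty := Finset.univ_nonempty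
    set t := Finset.univ.inf' hne (fun i => (1 - x i) / α i) with ht
    obtain ⟨i, -, hi⟩ := Finset.exists_mem_eq_inf' hne (fun i => (1 - x i) / α i)
    have ht0 : 0 ≤ t := by
      rw [ht]
      apply Finset.le_inf'
      intro j _
      have := hx.2 j
      simp only [Pi.one_apply] at this
      exact div_nonneg (by linarith) (le_of_lt (hα j).1)
    have hle : ∀ j, t ≤ (1 - x j) / α j := fun j =>
      Finset.inf'_le _ (Finset.mem_univ j)
    refine Set.mem_iUnion.2 ⟨i, x + t • α, ⟨⟨fun j => ?_, fun j => ?_⟩, ?_⟩, ?_⟩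
    · simpa using add_nonneg (hx.1 j) (mul_nonneg ht0 (le_of_lt (hα j).1))
    · have := hle j
      have hαj : 0 < α j := (hα j).1
      have : t * α j ≤ 1 - x j := by
        calc t * α j ≤ ((1 - x j) / α j) * α j := by
              exact mul_le_mul_of_nonneg_right this hαj.le
          _ = 1 - x j := div_mul_cancel₀ _ hαj.ne'
      simpa using by linarith
    · have hαi : 0 < α i := (hα i).1
      have : t * α i = 1 - x i := by
        rw [ht, hi, div_mul_cancel₀ _ hαi.ne']
      simp only [Pi.add_apply, Pi.smul_apply, smul_eq_mul]
      linarith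
    · simp only [piAlpha]
      have hsum' : ∑ j, (x + t • α) j = (∑ j, x j) + t := by
        simp [Finset.sum_add_distrib, ← Finset.mul_sum, hsum]
      rw [hsum']
      ext j
      simp only [Pi.sub_apply, Pi.add_apply, Pi.smul_apply, smul_eq_mul]
      ring
end

section
/- Let α ∈ (0,1)^d be a frequency vector and π_α the projection along ℝα onto 1^⊥. For j ≠ k, the intersection π_α(F_j) ∩ π_α(F_k) equals { Σ_{i=1}^d x_i π_α(e_i) : x_j = x_k = 1, x_i ∈ [0,1] for i ∉ {j,k} }; in particular it is contained in an affine subspace of dimension d − 2. -/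
theorem proj_upperFaces_inter {d : ℕ} (hd : 2 ≤ d)
    (α : Fin d → ℝ) (hα : ∀ i, α i ∈ Set.Ioo (0:ℝ) 1) (hsum : ∑ i, α i = 1)
    (j k : Fin d) (hjk : j ≠ k) :
    (piAlpha α '' upperFace d j) ∩ (piAlpha α '' upperFace d k)
      = piAlpha α '' {x | x ∈ Set.Icc (0 : Fin d → ℝ) 1 ∧ x j = 1 ∧ x k = 1}
    ∧ ∃ W : AffineSubspace ℝ (Fin d → ℝ),
        Module.finrank ℝ W.direction = d - 2 ∧
        (piAlpha α '' upperFace d j) ∩ (piAlpha α '' upperFace d k) ⊆ (W : Set (Fin d → ℝ)) := by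
  have hak := (hα k).1
  have haj := (hα j).1
  -- injectivity on the cube faces
  have hkey : ∀ x y : Fin d → ℝ, piAlpha α x = piAlpha α y →
      x ∈ Set.Icc (0 : Fin d → ℝ) 1 → y ∈ Set.Icc (0 : Fin d → ℝ) 1 →
      x j = 1 → y k = 1 → x = y := by
    intro x y h hx hy hxj hyk
    have hk' := congrFun h k
    have hj' := congrFun h j
    simp only [piAlpha, Pi.sub_apply, Pi.smul_apply, smul_eq_mul] at hk' hj'
    have hxk : x k ≤ 1 := by simpa using hx.2 k
    have hyj : y j ≤ 1 := by simpa using hy.2 j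
    have hle : ∑ i, x i ≤ ∑ i, y i := by
      by_contra h'
      push_neg at h'
      nlinarith [mul_pos hak (sub_pos.2 h')]
    have hge : ∑ i, y i ≤ ∑ i, x i := by
      by_contra h'
      push_neg at h'
      nlinarith [mul_pos haj (sub_pos.2 h')]
    have hS : ∑ i, x i = ∑ i, y i := le_antisymm hle hge
    funext i
    have hi := congrFun h i
    simp only [piAlpha, Pi.sub_apply, Pi.smul_apply, smul_eq_mul] at hi
    rw [hS] at hi
    linarith
  have h1 : (piAlpha α '' upperFace d j) ∩ (piAlpha α '' upperFace d k)
      = piAlpha α '' {x | x ∈ Set.Icc (0 : Fin d → ℝ) 1 ∧ x j = 1 ∧ x k = 1} := by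
    ext p
    constructor
    · rintro ⟨⟨x, ⟨hx01, hxj⟩, rfl⟩, ⟨y, ⟨hy01, hyk⟩, hpy⟩⟩
      have hxy : x = y := hkey x y hpy.symm hx01 hy01 hxj hyk
      exact ⟨x, ⟨hx01, hxj, hxy ▸ hyk⟩, rfl⟩
    · rintro ⟨x, ⟨hx01, hxj, hxk⟩, rfl⟩
      exact ⟨⟨x, ⟨hx01, hxj⟩, rfl⟩, ⟨x, ⟨hx01, hxk⟩, rfl⟩⟩
  refine ⟨h1, ?_⟩
  -- the linear map cutting out the affine subspace
  set L : (Fin d → ℝ) →ₗ[ℝ] ℝ × ℝ :=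
    { toFun := fun z => (∑ i, z i, α k * z j - α j * z k)
      map_add' := by
        intro a b
        simp only [Pi.add_apply, Finset.sum_add_distrib, Prod.mk_add_mk, Prod.mk.injEq]
        exact ⟨trivial, by ring⟩
      map_smul' := by
        intro c a
        simp only [Pi.smul_apply, smul_eq_mul, ← Finset.mul_sum, RingHom.id_apply,
          Prod.smul_mk, Prod.mk.injEq]
        exact ⟨trivial, by ring⟩ } with hL
  have hLapp : ∀ z : Fin d → ℝ, L z = (∑ i, z i, α k * z j - α j * z k) := fun z => rfl
  -- L is surjective
  have hsurj : Function.Surjective L := by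
    rintro ⟨a, b⟩
    have hden : α j + α k ≠ 0 := by positivity
    refine ⟨((a * α j + b) / (α j + α k)) • (Pi.single j 1 : Fin d → ℝ)
      + ((a * α k - b) / (α j + α k)) • (Pi.single k 1 : Fin d → ℝ), ?_⟩
    rw [hLapp]
    have h1j : (Pi.single j 1 : Fin d → ℝ) j = 1 := Pi.single_eq_same j 1
    have h1k : (Pi.single k 1 : Fin d → ℝ) k = 1 := Pi.single_eq_same k 1
    have h0jk : (Pi.single k 1 : Fin d → ℝ) j = 0 := Pi.single_eq_of_ne hjk 1
    have h0kj : (Pi.single j 1 : Fin d → ℝ) k = 0 := Pi.single_eq_of_ne hjk.symm 1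
    simp only [Pi.add_apply, Pi.smul_apply, smul_eq_mul, h1j, h1k, h0jk, h0kj,
      Finset.sum_add_distrib, ← Finset.mul_sum, Finset.sum_pi_single',
      Finset.mem_univ, if_true, Prod.mk.injEq]
    constructor <;> field_simp <;> ring
  have hrange : LinearMap.range L = ⊤ := LinearMap.range_eq_top.2 hsurj
  have hrank : Module.finrank ℝ (LinearMap.ker L) = d - 2 := by
    have h := LinearMap.finrank_range_add_finrank_ker L
    rw [hrange] at h
    have h2 : Module.finrank ℝ (⊤ : Submodule ℝ (ℝ × ℝ)) = 2 := by
      simp [finrank_top]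
    have hd' : Module.finrank ℝ (Fin d → ℝ) = d := by simp
    rw [h2, hd'] at h
    omega
  -- value of L on projected points of the double face
  have hLval : ∀ x : Fin d → ℝ, x j = 1 → x k = 1 →
      L (piAlpha α x) = (0, α k - α j) := by
    intro x hxj hxk
    rw [hLapp]
    have hsum' : ∑ i, (piAlpha α x) i = 0 := by
      simp only [piAlpha, Pi.sub_apply, Pi.smul_apply, smul_eq_mul,
        Finset.sum_sub_distrib, ← Finset.mul_sum, hsum, mul_one, sub_self]
    rw [hsum']
    have hj' : (piAlpha α x) j = 1 - (∑ i, x i) * α j := by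
      simp [piAlpha, hxj]
    have hk' : (piAlpha α x) k = 1 - (∑ i, x i) * α k := by
      simp [piAlpha, hxk]
    rw [hj', hk']
    simp only [Prod.mk.injEq]
    exact ⟨trivial, by ring⟩
  -- base point
  set x₀ : Fin d → ℝ := fun i => if i = j ∨ i = k then 1 else 0 with hx₀
  have hx₀j : x₀ j = 1 := by simp [hx₀]
  have hx₀k : x₀ k = 1 := by simp [hx₀]
  refine ⟨AffineSubspace.mk' (piAlpha α x₀) (LinearMap.ker L), ?_, ?_⟩
  · rw [AffineSubspace.direction_mk']
    exact hrank
  · intro p hp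
    rw [h1] at hp
    obtain ⟨x, ⟨hx01, hxj, hxk⟩, rfl⟩ := hp
    rw [SetLike.mem_coe, AffineSubspace.mem_mk', LinearMap.mem_ker]
    have : piAlpha α x -ᵥ piAlpha α x₀ = piAlpha α x - piAlpha α x₀ := rfl
    rw [this, map_sub, hLval x hxj hxk, hLval x₀ hx₀j hx₀k, sub_self]
end

section
/- If H_1, …, H_n are n affine hyperplanes in ℝ^d, then the complement ℝ^d \ (H_1 ∪ … ∪ H_n) has at most C(n,0) + C(n,1) + … + C(n,d) connected components, where C(n,k) are binomial coefficients. -/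
open Set

/-- sign vectors realizable by affine functions `x ↦ L i x + b i` -/
def hypRealizable {n e : ℕ} (L : Fin n → ((Fin e → ℝ) →ₗ[ℝ] ℝ)) (b : Fin n → ℝ) :
    Set (Fin n → Bool) :=
  {σ | ∃ x : Fin e → ℝ, ∀ i, if σ i then 0 < L i x + b i else L i x + b i < 0}

lemma pascal_sum (n e : ℕ) :
    ∑ k ∈ Finset.range (e + 1), (n + 1).choose k
      = ∑ k ∈ Finset.range (e + 1), n.choose k + ∑ k ∈ Finset.range e, n.choose k := by
  induction e with
  | zero => simp
  | succ e ih =>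
    rw [Finset.sum_range_succ, ih]
    have h1 := Finset.sum_range_succ (fun k => n.choose k) (e + 1)
    have h2 := Finset.sum_range_succ (fun k => n.choose k) e
    have h3 : (n + 1).choose (e + 1) = n.choose e + n.choose (e + 1) :=
      Nat.choose_succ_succ n e
    omega

lemma hypRealizable_card (n : ℕ) : ∀ (e : ℕ) (L : Fin n → ((Fin e → ℝ) →ₗ[ℝ] ℝ))
    (b : Fin n → ℝ),
    (hypRealizable L b).ncard ≤ ∑ k ∈ Finset.range (e + 1), n.choose k := by
  induction n with
  | zero =>
    intro e L b
    calc (hypRealizable L b).ncard ≤ (univ : Set (Fin 0 → Bool)).ncard :=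
          Set.ncard_le_ncard (subset_univ _) (toFinite _)
      _ = 1 := by simp [Set.ncard_univ]
      _ ≤ _ := by
          calc 1 = Nat.choose 0 0 := rfl
            _ ≤ _ := Finset.single_le_sum (f := fun k => Nat.choose 0 k)
                (fun _ _ => Nat.zero_le _) (Finset.mem_range.2 (Nat.succ_pos e))
  | succ n ih =>
    intro e L b
    set R := hypRealizable L b with hR
    set L' : Fin n → ((Fin e → ℝ) →ₗ[ℝ] ℝ) := fun i => L i.castSucc with hL'
    set b' : Fin n → ℝ := fun i => b i.castSucc with hb'
    set res : (Fin (n+1) → Bool) → (Fin n → Bool) := fun σ => σ ∘ Fin.castSucc with hres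
    have hresR : ∀ σ ∈ R, res σ ∈ hypRealizable L' b' := by
      rintro σ ⟨x, hx⟩
      exact ⟨x, fun i => hx i.castSucc⟩
    -- injectivity of res on σ with fixed last coordinate
    have hinj : ∀ t : Bool, Set.InjOn res {σ | σ (Fin.last n) = t} := by
      intro t σ₁ h1 σ₂ h2 h
      funext j
      induction j using Fin.lastCases with
      | last => rw [h1, h2]
      | cast j => exact congrFun h j
    by_cases hL0 : L (Fin.last n) = 0
    · -- last function is constant: res is injective on R
      have hlastconst : ∀ σ ∈ R, σ (Fin.last n) = decide (0 < b (Fin.last n)) := by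
        rintro σ ⟨x, hx⟩
        have := hx (Fin.last n)
        rw [hL0] at this
        simp only [LinearMap.zero_apply, zero_add] at this
        cases h : σ (Fin.last n) <;> rw [h] at this <;> simp at this ⊢ <;> linarith
      have hinjR : Set.InjOn res R := fun σ₁ h1 σ₂ h2 h =>
        hinj _ (hlastconst σ₁ h1) (hlastconst σ₂ h2) h
      calc R.ncard = (res '' R).ncard := (Set.ncard_image_of_injOn hinjR).symm
        _ ≤ (hypRealizable L' b').ncard :=
            Set.ncard_le_ncard (image_subset_iff.2 hresR) (toFinite _)
        _ ≤ ∑ k ∈ Finset.range (e + 1), n.choose k := ih e L' b'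
        _ ≤ _ := Finset.sum_le_sum fun k _ => Nat.choose_le_choose k (Nat.le_succ n)
    · -- last function nonconstant
      obtain ⟨e', rfl⟩ : ∃ e', e = e' + 1 := by
        rcases e with _ | e'
        · exact absurd (LinearMap.ext fun x => by
            rw [Subsingleton.elim x 0, map_zero]; rfl) hL0
        · exact ⟨e', rfl⟩
      -- a point x₀ on the last hyperplane
      obtain ⟨u, hu⟩ : ∃ u, L (Fin.last n) u ≠ 0 := by
        by_contra h
        push_neg at h
        exact hL0 (LinearMap.ext fun x => h x)
      set x₀ : Fin (e' + 1) → ℝ := (-(b (Fin.last n)) / L (Fin.last n) u) • u with hx₀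
      have hx₀val : L (Fin.last n) x₀ = -(b (Fin.last n)) := by
        rw [hx₀, map_smul, smul_eq_mul, div_mul_cancel₀ _ hu]
      -- parametrize the kernel of the last map
      have hker : Module.finrank ℝ (LinearMap.ker (L (Fin.last n))) = e' := by
        have h1 := LinearMap.finrank_range_add_finrank_ker (L (Fin.last n))
        have h2 : Module.finrank ℝ (LinearMap.range (L (Fin.last n))) = 1 := by
          have hle : Module.finrank ℝ (LinearMap.range (L (Fin.last n))) ≤ 1 := by
            simpa using Submodule.finrank_le (LinearMap.range (L (Fin.last n)))
          have hpos : 0 < Module.finrank ℝ (LinearMap.range (L (Fin.last n))) := by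
            haveI : Nontrivial (LinearMap.range (L (Fin.last n))) :=
              Submodule.nontrivial_iff_ne_bot.2 (by
                simp only [ne_eq, LinearMap.range_eq_bot]; exact hL0)
            exact Module.finrank_pos
          omega
        rw [h2] at h1
        simp only [Module.finrank_fin_fun] at h1
        omega
      set equiv : (Fin e' → ℝ) ≃ₗ[ℝ] (LinearMap.ker (L (Fin.last n))) :=
        LinearEquiv.ofFinrankEq _ _ (by rw [Module.finrank_fin_fun, hker]) with hequiv
      set ψ : (Fin e' → ℝ) →ₗ[ℝ] (Fin (e' + 1) → ℝ) :=
        (LinearMap.ker (L (Fin.last n))).subtype.comp (equiv : (Fin e' → ℝ) →ₗ[ℝ] _)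
        with hψ
      have hψsurj : ∀ z, L (Fin.last n) z = 0 → ∃ y, ψ y = z := fun z hz =>
        ⟨equiv.symm ⟨z, hz⟩, by simp [hψ]⟩
      set h : Fin n → ((Fin e' → ℝ) →ₗ[ℝ] ℝ) := fun i => (L i.castSucc).comp ψ with hh
      set bh : Fin n → ℝ := fun i => L i.castSucc x₀ + b i.castSucc with hbh
      -- the doubly-extendable sign vectors are realizable on the hyperplane
      set R₁ : Set (Fin (n+1) → Bool) := {σ ∈ R | σ (Fin.last n) = true} with hR₁
      set R₂ : Set (Fin (n+1) → Bool) := {σ ∈ R | σ (Fin.last n) = false} with hR₂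
      have hD : res '' R₁ ∩ res '' R₂ ⊆ hypRealizable h bh := by
        rintro τ ⟨⟨σp, ⟨⟨xp, hxp⟩, hlp⟩, hτp⟩, ⟨σm, ⟨⟨xm, hxm⟩, hlm⟩, hτm⟩⟩
        have hs : 0 < L (Fin.last n) xp + b (Fin.last n) := by
          have := hxp (Fin.last n); rwa [hlp, if_pos rfl] at this
        have hugly : L (Fin.last n) xm + b (Fin.last n) < 0 := by
          have := hxm (Fin.last n); rwa [hlm, if_neg (by simp)] at this
        set s : ℝ := L (Fin.last n) xp + b (Fin.last n)
        set w : ℝ := L (Fin.last n) xm + b (Fin.last n)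
        have hsw : 0 < s - w := by linarith
        set t : ℝ := s / (s - w) with ht
        have ht0 : 0 < t := div_pos hs hsw
        have ht1 : t < 1 := by
          rw [ht, div_lt_one hsw]; linarith
        set z : Fin (e' + 1) → ℝ := xp + t • (xm - xp) with hz
        have hLz : ∀ j : Fin (n + 1), L j z + b j
            = (1 - t) * (L j xp + b j) + t * (L j xm + b j) := by
          intro j
          simp only [hz, map_add, map_smul, map_sub, smul_eq_mul]
          ring
        have hzlast : L (Fin.last n) z + b (Fin.last n) = 0 := by
          rw [hLz]
          show (1 - t) * s + t * w = 0
          rw [ht]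
          field_simp
          ring
        obtain ⟨y, hy⟩ := hψsurj (z - x₀) (by
          rw [map_sub, hx₀val]
          have := hzlast
          linarith)
        refine ⟨y, fun i => ?_⟩
        have hval : h i y + bh i = L i.castSucc z + b i.castSucc := by
          simp only [hh, hbh, LinearMap.comp_apply, hy, map_sub]
          ring
        rw [hval, hLz i.castSucc]
        have h1 := hxp i.castSucc
        have h2 := hxm i.castSucc
        have hσi : σp i.castSucc = τ i := by rw [← hτp]; rfl
        have hσi' : σm i.castSucc = τ i := by rw [← hτm]; rfl
        rw [hσi] at h1; rw [hσi'] at h2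
        have h1t : 0 < 1 - t := by linarith
        cases hτ : τ i with
        | true =>
          rw [hτ] at h1 h2
          rw [if_pos rfl] at h1 h2 ⊢
          have e1 := mul_pos h1t h1
          have e2 := mul_pos ht0 h2
          linarith
        | false =>
          rw [hτ] at h1 h2
          rw [if_neg (by simp)] at h1 h2 ⊢
          have e1 := mul_pos h1t (neg_pos.2 h1)
          have e2 := mul_pos ht0 (neg_pos.2 h2)
          linarith
      -- counting
      have hcover : R = R₁ ∪ R₂ := by
        ext σ; simp only [hR₁, hR₂, mem_union, mem_setOf_eq, Set.mem_sep_iff]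
        cases h : σ (Fin.last n) <;> tauto
      have h1 : R₁.ncard = (res '' R₁).ncard :=
        (Set.ncard_image_of_injOn (fun σ₁ h1 σ₂ h2 => hinj true h1.2 h2.2)).symm
      have h2 : R₂.ncard = (res '' R₂).ncard :=
        (Set.ncard_image_of_injOn (fun σ₁ h1 σ₂ h2 => hinj false h1.2 h2.2)).symm
      have hunion : res '' R₁ ∪ res '' R₂ ⊆ hypRealizable L' b' := by
        rintro τ (⟨σ, hσ, rfl⟩ | ⟨σ, hσ, rfl⟩)
        · exact hresR σ hσ.1
        · exact hresR σ hσ.1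
      calc R.ncard ≤ R₁.ncard + R₂.ncard := by
            rw [hcover]; exact Set.ncard_union_le _ _
        _ = (res '' R₁ ∪ res '' R₂).ncard + (res '' R₁ ∩ res '' R₂).ncard := by
            rw [h1, h2, Set.ncard_union_add_ncard_inter]
        _ ≤ (hypRealizable L' b').ncard + (hypRealizable h bh).ncard :=
            Nat.add_le_add (Set.ncard_le_ncard hunion (toFinite _))
              (Set.ncard_le_ncard hD (toFinite _))
        _ ≤ (∑ k ∈ Finset.range (e' + 1 + 1), n.choose k)
              + ∑ k ∈ Finset.range (e' + 1), n.choose k :=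
            Nat.add_le_add (ih _ L' b') (ih _ h bh)
        _ = _ := (pascal_sum n (e' + 1)).symm

section MainAux

variable {d n : ℕ} (f : Fin n → ((Fin d → ℝ) →ₗ[ℝ] ℝ)) (c : Fin n → ℝ)

/-- the open sign cell of a sign vector -/
def hypCell (σ : Fin n → Bool) : Set (Fin d → ℝ) :=
  {x | ∀ i, if σ i then 0 < f i x + -(c i) else f i x + -(c i) < 0}

lemma hypCell_subset (σ : Fin n → Bool) :
    hypCell f c σ ⊆ {y : Fin d → ℝ | ∀ i, f i y ≠ c i} := by
  intro x hx i hc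
  have h1 := hx i
  cases h : σ i <;> rw [h] at h1
  · rw [if_neg (by simp), hc] at h1; simp at h1
  · rw [if_pos rfl, hc] at h1; simp at h1

lemma hypCell_convex (σ : Fin n → Bool) : Convex ℝ (hypCell f c σ) := by
  intro x hx y hy a b ha hb hab
  intro i
  have h1 := hx i
  have h2 := hy i
  have hfx : f i (a • x + b • y) = a * f i x + b * f i y := by
    rw [map_add, map_smul, map_smul]; rfl
  have key : a * f i x + b * f i y + -(c i)
      = a * (f i x + -(c i)) + b * (f i y + -(c i)) := by
    linear_combination (c i) * hab
  have hor : 0 < a ∨ 0 < b := by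
    by_contra h
    push_neg at h
    linarith [h.1, h.2]
  cases h : σ i <;> rw [h] at h1 h2
  · rw [if_neg (by simp)] at h1 h2 ⊢
    rw [hfx, key]
    rcases hor with ha' | hb'
    · linarith [mul_neg_of_pos_of_neg ha' h1, mul_nonpos_of_nonneg_of_nonpos hb h2.le]
    · linarith [mul_nonpos_of_nonneg_of_nonpos ha h1.le, mul_neg_of_pos_of_neg hb' h2]
  · rw [if_pos rfl] at h1 h2 ⊢
    rw [hfx, key]
    rcases hor with ha' | hb'
    · linarith [mul_pos ha' h1, mul_nonneg hb h2.le]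
    · linarith [mul_nonneg ha h1.le, mul_pos hb' h2]

lemma hypCell_isOpen (σ : Fin n → Bool) : IsOpen (hypCell f c σ) := by
  have : hypCell f c σ = ⋂ i, {x : Fin d → ℝ |
      if σ i then 0 < f i x + -(c i) else f i x + -(c i) < 0} := by
    ext x; simp [hypCell]
  rw [this]
  apply isOpen_iInter_of_finite
  intro i
  have hcont : Continuous fun x : Fin d → ℝ => f i x + -(c i) :=
    ((f i).continuous_of_finiteDimensional).add continuous_const
  cases h : σ i
  · simp only [Bool.false_eq_true, if_false]
    exact isOpen_lt hcont continuous_const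
  · simp only [if_true]
    exact isOpen_lt continuous_const hcont

/-- the sign vector of a point -/
noncomputable def hypSgn (x : Fin d → ℝ) : Fin n → Bool := fun i => decide (c i < f i x)

lemma mem_hypCell_sgn {x : Fin d → ℝ} (hx : ∀ i, f i x ≠ c i) :
    x ∈ hypCell f c (hypSgn f c x) := by
  intro i
  by_cases h : c i < f i x
  · rw [if_pos (by simp [hypSgn, h])]
    linarith
  · rw [if_neg (by simp [hypSgn, h])]
    rcases lt_trichotomy (f i x) (c i) with h' | h' | h'
    · linarith
    · exact absurd h' (hx i)
    · exact absurd h' h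

lemma hypSgn_eq_of_mem {σ : Fin n → Bool} {x : Fin d → ℝ} (hx : x ∈ hypCell f c σ) :
    σ = hypSgn f c x := by
  funext i
  have h1 := hx i
  cases h : σ i <;> rw [h] at h1
  · rw [if_neg (by simp)] at h1
    have hlt : ¬ (c i < f i x) := by linarith
    simp [hypSgn, hlt]
  · rw [if_pos rfl] at h1
    have hlt : c i < f i x := by linarith
    simp [hypSgn, hlt]

lemma hyp_component_eq {x : Fin d → ℝ} (hx : x ∈ {y : Fin d → ℝ | ∀ i, f i y ≠ c i}) :
    connectedComponentIn {y : Fin d → ℝ | ∀ i, f i y ≠ c i} x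
      = hypCell f c (hypSgn f c x) := by
  set S := {y : Fin d → ℝ | ∀ i, f i y ≠ c i} with hS
  have hxc : x ∈ hypCell f c (hypSgn f c x) := mem_hypCell_sgn f c hx
  apply le_antisymm
  · -- component ⊆ cell, via disjoint open cover
    set V : Set (Fin d → ℝ) :=
      ⋃ σ ∈ {σ : Fin n → Bool | σ ≠ hypSgn f c x}, hypCell f c σ with hV
    have hVopen : IsOpen V := isOpen_biUnion fun σ _ => hypCell_isOpen f c σ
    have hdisj : Disjoint (hypCell f c (hypSgn f c x)) V := by
      rw [Set.disjoint_left]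
      intro y hy1 hy2
      simp only [hV, mem_iUnion, mem_setOf_eq] at hy2
      obtain ⟨σ, hσne, hyσ⟩ := hy2
      exact hσne ((hypSgn_eq_of_mem f c hyσ).trans (hypSgn_eq_of_mem f c hy1).symm)
    have hsub : S ⊆ hypCell f c (hypSgn f c x) ∪ V := by
      intro y hy
      by_cases h : hypSgn f c y = hypSgn f c x
      · left; rw [← h]; exact mem_hypCell_sgn f c hy
      · right
        simp only [hV, mem_iUnion, mem_setOf_eq]
        exact ⟨hypSgn f c y, h, mem_hypCell_sgn f c hy⟩
    apply IsPreconnected.subset_left_of_subset_union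
      (hypCell_isOpen f c _) hVopen hdisj
      ((connectedComponentIn_subset S x).trans hsub)
      ⟨x, mem_connectedComponentIn hx, hxc⟩
    exact isPreconnected_connectedComponentIn
  · exact ((hypCell_convex f c _).isPreconnected).subset_connectedComponentIn hxc
      (hypCell_subset f c _)

end MainAux

theorem components_of_hyperplane_arrangement_complement {d n : ℕ}
    (f : Fin n → ((Fin d → ℝ) →ₗ[ℝ] ℝ)) (c : Fin n → ℝ) (hf : ∀ i, f i ≠ 0) :
    {Cc : Set (Fin d → ℝ) | ∃ x ∈ {y : Fin d → ℝ | ∀ i, f i y ≠ c i},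
        Cc = connectedComponentIn {y : Fin d → ℝ | ∀ i, f i y ≠ c i} x}.Finite
    ∧ {Cc : Set (Fin d → ℝ) | ∃ x ∈ {y : Fin d → ℝ | ∀ i, f i y ≠ c i},
        Cc = connectedComponentIn {y : Fin d → ℝ | ∀ i, f i y ≠ c i} x}.ncard
      ≤ ∑ k ∈ Finset.range (d + 1), n.choose k := by
  have hset : {Cc : Set (Fin d → ℝ) | ∃ x ∈ {y : Fin d → ℝ | ∀ i, f i y ≠ c i},
        Cc = connectedComponentIn {y : Fin d → ℝ | ∀ i, f i y ≠ c i} x}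
      = hypCell f c '' hypRealizable f (fun i => -(c i)) := by
    ext C
    constructor
    · rintro ⟨x, hx, rfl⟩
      exact ⟨hypSgn f c x, ⟨x, mem_hypCell_sgn f c hx⟩, (hyp_component_eq f c hx).symm⟩
    · rintro ⟨σ, ⟨x, hxσ⟩, rfl⟩
      have hxc : x ∈ hypCell f c σ := hxσ
      have hxS : x ∈ {y : Fin d → ℝ | ∀ i, f i y ≠ c i} := hypCell_subset f c σ hxc
      refine ⟨x, hxS, ?_⟩
      rw [hyp_component_eq f c hxS, ← hypSgn_eq_of_mem f c hxc]
  constructor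
  · rw [hset]
    exact (Set.toFinite _).image _
  · rw [hset]
    calc (hypCell f c '' hypRealizable f (fun i => -(c i))).ncard
        ≤ (hypRealizable f fun i => -(c i)).ncard := Set.ncard_image_le (Set.toFinite _)
      _ ≤ _ := hypRealizable_card n d f _
end

section
/- Let α ∈ ℝ^d be such that the coordinates of (1, α) ∈ ℝ^{d+1} are rationally independent. Let H ⊂ ℝ^d be an affine hyperplane and K ⊂ ℝ^d a bounded set. Then there exists a positive integer Q, depending only on K and the direction (translation vector space) of H, such that for every a ∈ ℝ^d, the set of integers q with a + qα ∈ (K ∩ H) + ℤ^d has cardinality at most Q. -/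
theorem finitely_many_lattice_hits_of_hyperplane {d : ℕ} (α : Fin d → ℝ)
    (hirr : ∀ (q0 : ℤ) (q : Fin d → ℤ),
      (q0 : ℝ) + ∑ i, (q i : ℝ) * α i = 0 → q0 = 0 ∧ q = 0)
    (f : (Fin d → ℝ) →ₗ[ℝ] ℝ) (hf : f ≠ 0)
    (K : Set (Fin d → ℝ)) (hK : Bornology.IsBounded K) :
    ∃ Q : ℕ, 0 < Q ∧ ∀ (c : ℝ) (a : Fin d → ℝ),
      {q : ℤ | ∃ m : Fin d → ℤ,
          (a + (q : ℝ) • α - fun i => (m i : ℝ)) ∈ K ∧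
          f (a + (q : ℝ) • α - fun i => (m i : ℝ)) = c}.Finite
      ∧ {q : ℤ | ∃ m : Fin d → ℤ,
          (a + (q : ℝ) • α - fun i => (m i : ℝ)) ∈ K ∧
          f (a + (q : ℝ) • α - fun i => (m i : ℝ)) = c}.ncard ≤ Q := by
  classical
  -- the linear map Φ (t, x) = t • α - x
  set Φ : (ℝ × (Fin d → ℝ)) →ₗ[ℝ] (Fin d → ℝ) :=
    (LinearMap.fst ℝ ℝ (Fin d → ℝ)).smulRight α - LinearMap.snd ℝ ℝ (Fin d → ℝ) with hΦdef
  have hΦ : ∀ (t : ℝ) (x : Fin d → ℝ), Φ (t, x) = t • α - x := fun t x => rfl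
  -- the set of integer vectors killed by f ∘ Φ
  set S : Set (ℝ × (Fin d → ℝ)) :=
    {v | (∃ (p : ℤ) (n : Fin d → ℤ), v = ((p : ℝ), fun i => (n i : ℝ))) ∧ f (Φ v) = 0}
    with hSdef
  set W : Submodule ℝ (ℝ × (Fin d → ℝ)) := Submodule.span ℝ S with hWdef
  have hSker : S ⊆ (LinearMap.ker (f.comp Φ) : Set (ℝ × (Fin d → ℝ))) := by
    intro v hv
    exact LinearMap.mem_ker.mpr hv.2
  -- Key lemma A : (1, α) ∉ W
  have hA : ((1 : ℝ), α) ∉ W := by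
    intro hmem
    obtain ⟨T, hTS, hT⟩ := Submodule.mem_span_finite_of_mem_span hmem
    -- rational cast map
    set castQ : (ℚ × (Fin d → ℚ)) →ₗ[ℚ] (ℝ × (Fin d → ℝ)) :=
      LinearMap.prodMap (Algebra.linearMap ℚ ℝ)
        (LinearMap.pi fun i => (Algebra.linearMap ℚ ℝ).comp (LinearMap.proj i)) with hcastQ
    have hcast : ∀ (s : ℚ) (y : Fin d → ℚ), castQ (s, y) = ((s : ℝ), fun i => (y i : ℝ)) :=
      fun s y => rfl
    set U : Submodule ℚ (ℚ × (Fin d → ℚ)) :=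
      Submodule.comap castQ ((Submodule.span ℝ (T : Set (ℝ × (Fin d → ℝ)))).restrictScalars ℚ)
      with hUdef
    have hTker : Submodule.span ℝ (T : Set (ℝ × (Fin d → ℝ))) ≤ LinearMap.ker (f.comp Φ) :=
      Submodule.span_le.mpr (fun v hv => hSker (hTS hv))
    have hUne : U ≠ ⊤ := by
      intro htop
      apply hf
      apply Module.Basis.ext (Pi.basisFun ℝ (Fin d))
      intro i
      have h1 : ((0 : ℚ), (Pi.single i 1 : Fin d → ℚ)) ∈ U := htop ▸ Submodule.mem_top
      have h2 : castQ ((0 : ℚ), (Pi.single i 1 : Fin d → ℚ)) ∈ LinearMap.ker (f.comp Φ) :=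
        hTker h1
      rw [hcast] at h2
      have h3 : f (Φ (((0 : ℚ) : ℝ), fun j => ((Pi.single i 1 : Fin d → ℚ) j : ℝ))) = 0 :=
        LinearMap.mem_ker.mp h2
      rw [hΦ] at h3
      have h4 : (fun j => ((Pi.single i 1 : Fin d → ℚ) j : ℝ)) = (Pi.single i 1 : Fin d → ℝ) := by
        funext j
        by_cases hji : j = i
        · subst hji; simp
        · simp [Pi.single_apply, hji]
      rw [h4] at h3
      simp only [Rat.cast_zero, zero_smul, zero_sub, map_neg, neg_eq_zero] at h3
      simpa using h3
    -- get a nonzero rational functional vanishing on U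
    obtain ⟨w, hw⟩ : ∃ w, w ∉ U := by
      by_contra h
      push_neg at h
      exact hUne (Submodule.eq_top_iff'.mpr h)
    have hπw : U.mkQ w ≠ 0 := by
      simpa [Submodule.Quotient.mk_eq_zero] using hw
    obtain ⟨g, hg⟩ : ∃ g : Module.Dual ℚ ((ℚ × (Fin d → ℚ)) ⧸ U), g (U.mkQ w) ≠ 0 := by
      by_contra h
      push_neg at h
      exact hπw ((Module.forall_dual_apply_eq_zero_iff ℚ _).mp h)
    set ℓ : (ℚ × (Fin d → ℚ)) →ₗ[ℚ] ℚ := g.comp U.mkQ with hℓdef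
    have hℓU : ∀ u ∈ U, ℓ u = 0 := by
      intro u hu
      have : U.mkQ u = 0 := (Submodule.Quotient.mk_eq_zero U).mpr hu
      simp [hℓdef, this]
    -- coefficients of ℓ
    set q0 : ℚ := ℓ ((1 : ℚ), 0) with hq0
    set qc : Fin d → ℚ := fun i => ℓ (0, Pi.single i 1) with hqc
    have hexp : ∀ v : ℚ × (Fin d → ℚ), ℓ v = q0 * v.1 + ∑ i, qc i * v.2 i := by
      intro v
      have hv : v = v.1 • ((1 : ℚ), (0 : Fin d → ℚ))
          + ∑ i, v.2 i • ((0 : ℚ), (Pi.single i 1 : Fin d → ℚ)) := by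
        rw [Prod.ext_iff]
        constructor
        · simp [Prod.fst_sum]
        · simp only [Prod.snd_add, Prod.smul_snd, smul_zero, Prod.snd_sum, zero_add,
            Prod.smul_fst, Prod.fst_add, smul_eq_mul, mul_one, mul_zero]
          funext j
          simp [Finset.sum_apply, Pi.single_apply, mul_comm]
      calc ℓ v = ℓ (v.1 • ((1 : ℚ), (0 : Fin d → ℚ))
          + ∑ i, v.2 i • ((0 : ℚ), (Pi.single i 1 : Fin d → ℚ))) := by rw [← hv]
        _ = v.1 * ℓ ((1 : ℚ), 0) + ∑ i, v.2 i * ℓ (0, Pi.single i 1) := by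
            simp only [map_add, map_smul, map_sum, smul_eq_mul]
        _ = q0 * v.1 + ∑ i, qc i * v.2 i := by
            rw [mul_comm]
            congr 1
            exact Finset.sum_congr rfl fun i _ => mul_comm _ _
    -- the corresponding real functional
    set L : (ℝ × (Fin d → ℝ)) →ₗ[ℝ] ℝ :=
      (q0 : ℝ) • (LinearMap.fst ℝ ℝ (Fin d → ℝ))
        + ∑ i, (qc i : ℝ) • ((LinearMap.proj i).comp (LinearMap.snd ℝ ℝ (Fin d → ℝ))) with hLdef
    have hLapp : ∀ (t : ℝ) (x : Fin d → ℝ), L (t, x) = (q0 : ℝ) * t + ∑ i, (qc i : ℝ) * x i := by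
      intro t x
      simp [hLdef, LinearMap.sum_apply]
    have hLT : ∀ v ∈ (T : Set (ℝ × (Fin d → ℝ))), L v = 0 := by
      intro v hv
      obtain ⟨p, n, rfl⟩ := (hTS hv).1
      have hqmem : (((p : ℚ)), fun i => ((n i : ℚ))) ∈ U := by
        rw [hUdef]
        simp only [Submodule.mem_comap, Submodule.restrictScalars_mem]
        have : castQ (((p : ℚ)), fun i => ((n i : ℚ))) = ((p : ℝ), fun i => (n i : ℝ)) := by
          rw [hcast]
          push_cast
          rfl
        rw [this]
        exact Submodule.subset_span hv
      have h0 := hℓU _ hqmem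
      rw [hexp] at h0
      rw [hLapp]
      have h0' : q0 * (p : ℚ) + ∑ i, qc i * ((n i : ℚ)) = 0 := by simpa using h0
      exact_mod_cast h0'
    have hL1α : L ((1 : ℝ), α) = 0 := by
      have hle : Submodule.span ℝ (T : Set (ℝ × (Fin d → ℝ))) ≤ LinearMap.ker L :=
        Submodule.span_le.mpr (fun v hv => LinearMap.mem_ker.mpr (hLT v hv))
      exact LinearMap.mem_ker.mp (hle hT)
    rw [hLapp] at hL1α
    -- clear denominators
    set D : ℕ := q0.den * ∏ i, (qc i).den with hD
    have hDpos : 0 < D := by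
      apply Nat.mul_pos q0.pos
      exact Finset.prod_pos fun i _ => (qc i).pos
    have key : ∀ r : ℚ, r.den ∣ D → ((r.num * (D / r.den : ℕ) : ℤ) : ℚ) = r * D := by
      intro r hr
      have hden : ((r.den : ℚ)) ≠ 0 := by exact_mod_cast r.den_nz
      obtain ⟨k, hk⟩ := hr
      have hk' : (D / r.den : ℕ) = k := by rw [hk]; exact Nat.mul_div_cancel_left k r.pos
      have hDq : (D : ℚ) = (r.den : ℚ) * (k : ℚ) := by exact_mod_cast congrArg (fun t : ℕ => (t : ℚ)) hk
      rw [hk', hDq]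
      have hnum : (r.num : ℚ) = r * (r.den : ℚ) := by
        have h : (r.num : ℚ) / r.den * r.den = r * r.den := by rw [Rat.num_div_den]
        rwa [div_mul_cancel₀ _ hden] at h
      push_cast
      rw [hnum]
      ring
    have hd0 : q0.den ∣ D := Dvd.intro _ rfl
    have hdi : ∀ i, (qc i).den ∣ D := fun i =>
      Dvd.dvd.mul_left (Finset.dvd_prod_of_mem _ (Finset.mem_univ i)) _
    set z0 : ℤ := q0.num * (D / q0.den : ℕ) with hz0
    set zc : Fin d → ℤ := fun i => (qc i).num * (D / (qc i).den : ℕ) with hzc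
    have hz0q : ((z0 : ℤ) : ℚ) = q0 * D := key q0 hd0
    have hziq : ∀ i, ((zc i : ℤ) : ℚ) = qc i * D := fun i => key (qc i) (hdi i)
    have hrel : ((z0 : ℝ)) + ∑ i, ((zc i : ℝ)) * α i = 0 := by
      have e0 : ((z0 : ℝ)) = (q0 : ℝ) * (D : ℝ) := by
        have := congrArg (fun t : ℚ => (t : ℝ)) hz0q
        push_cast at this
        exact this
      have ei : ∀ i, ((zc i : ℝ)) = (qc i : ℝ) * (D : ℝ) := by
        intro i
        have := congrArg (fun t : ℚ => (t : ℝ)) (hziq i)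
        push_cast at this
        exact this
      calc ((z0 : ℝ)) + ∑ i, ((zc i : ℝ)) * α i
          = (D : ℝ) * ((q0 : ℝ) * 1 + ∑ i, (qc i : ℝ) * α i) := by
            rw [e0]
            rw [mul_add, Finset.mul_sum]
            congr 1
            · ring
            · exact Finset.sum_congr rfl fun i _ => by rw [ei i]; ring
        _ = 0 := by rw [hL1α, mul_zero]
    obtain ⟨hz0z, hzcz⟩ := hirr z0 zc hrel
    -- so all coefficients vanish, hence ℓ = 0, contradiction
    have hq0z : q0 = 0 := by
      have : ((z0 : ℤ) : ℚ) = 0 := by exact_mod_cast hz0z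
      rw [hz0q] at this
      have hDne : ((D : ℚ)) ≠ 0 := by positivity
      exact (mul_eq_zero.mp this).resolve_right hDne
    have hqcz : ∀ i, qc i = 0 := by
      intro i
      have : ((zc i : ℤ) : ℚ) = 0 := by
        have := congrFun hzcz i
        exact_mod_cast this
      rw [hziq i] at this
      have hDne : ((D : ℚ)) ≠ 0 := by positivity
      exact (mul_eq_zero.mp this).resolve_right hDne
    apply hg
    have : ℓ w = 0 := by
      rw [hexp, hq0z]
      simp [hqcz]
    simpa [hℓdef] using this
  -- Lemma B : Φ is injective on W
  have hB : ∀ v ∈ W, Φ v = 0 → v = 0 := by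
    intro v hv hΦv
    obtain ⟨t, x⟩ := v
    rw [hΦ] at hΦv
    have hx : x = t • α := by
      have := sub_eq_zero.mp hΦv
      exact this.symm
    subst hx
    by_cases ht : t = 0
    · subst ht; simp
    · exfalso
      apply hA
      have : ((1 : ℝ), α) = t⁻¹ • ((t, t • α) : ℝ × (Fin d → ℝ)) := by
        rw [Prod.ext_iff]
        constructor
        · simp [ht]
        · simp [smul_smul, inv_mul_cancel₀ ht]
      rw [this]
      exact Submodule.smul_mem W _ hv
  -- Lemma C : antilipschitz bound on W
  obtain ⟨C, hC0, hCanti⟩ := (Φ.comp W.subtype).exists_antilipschitzWith (by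
    rw [LinearMap.ker_eq_bot']
    intro v hv
    have := hB v.1 v.2 hv
    exact Subtype.ext this)
  have hCbound : ∀ v ∈ W, ‖v‖ ≤ (C : ℝ) * ‖Φ v‖ := by
    intro v hv
    have := hCanti.le_mul_dist ⟨v, hv⟩ 0
    simpa [dist_eq_norm] using this
  -- get diameter bound R for K
  obtain ⟨R, hR⟩ := Metric.isBounded_iff.mp hK
  -- The difference set P
  set P : Set ℤ := {p : ℤ | ∃ n : Fin d → ℤ,
    f ((p : ℝ) • α - fun i => (n i : ℝ)) = 0 ∧ ‖(p : ℝ) • α - fun i => (n i : ℝ)‖ ≤ R}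
    with hPdef
  have hPfin : P.Finite := by
    apply Set.Finite.subset (Set.finite_Icc (-(⌈(C : ℝ) * R⌉)) ⌈(C : ℝ) * R⌉)
    intro p hp
    obtain ⟨n, hn1, hn2⟩ := hp
    have hvS : (((p : ℝ)), fun i => ((n i : ℝ))) ∈ S := ⟨⟨p, n, rfl⟩, hn1⟩
    have hvW : (((p : ℝ)), fun i => ((n i : ℝ))) ∈ W := Submodule.subset_span hvS
    have h2 : |(p : ℝ)| ≤ (C : ℝ) * R := by
      have hb := hCbound _ hvW
      rw [hΦ] at hb
      have hfst : |(p : ℝ)| ≤ ‖(((p : ℝ)), fun i => ((n i : ℝ)))‖ := by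
        simpa using norm_fst_le (((p : ℝ)), fun i => ((n i : ℝ)))
      calc |(p : ℝ)| ≤ ‖(((p : ℝ)), fun i => ((n i : ℝ)))‖ := hfst
        _ ≤ (C : ℝ) * ‖(p : ℝ) • α - fun i => (n i : ℝ)‖ := hb
        _ ≤ (C : ℝ) * R := by
            apply mul_le_mul_of_nonneg_left hn2 (le_of_lt (by exact_mod_cast hC0))
    rw [Set.mem_Icc]
    constructor
    · have : -((C : ℝ) * R) ≤ (p : ℝ) := neg_le_of_abs_le h2
      have h3 : ((-(⌈(C : ℝ) * R⌉) : ℤ) : ℝ) ≤ (p : ℝ) := by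
        push_cast
        calc (-(⌈(C : ℝ) * R⌉ : ℝ)) ≤ -((C : ℝ) * R) := by
              simp only [neg_le_neg_iff]
              exact Int.le_ceil _
          _ ≤ (p : ℝ) := this
      exact_mod_cast h3
    · have : (p : ℝ) ≤ (C : ℝ) * R := le_of_abs_le h2
      have h3 : ((p : ℝ)) ≤ ((⌈(C : ℝ) * R⌉ : ℤ) : ℝ) := le_trans this (Int.le_ceil _)
      exact_mod_cast h3
  -- the bound
  refine ⟨hPfin.toFinset.card + 1, Nat.succ_pos _, ?_⟩
  intro c a
  set S' : Set ℤ := {q : ℤ | ∃ m : Fin d → ℤ,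
      (a + (q : ℝ) • α - fun i => (m i : ℝ)) ∈ K ∧
      f (a + (q : ℝ) • α - fun i => (m i : ℝ)) = c} with hS'def
  rcases Set.eq_empty_or_nonempty S' with hemp | ⟨q0', hq0'⟩
  · rw [hemp]
    exact ⟨Set.finite_empty, by simp⟩
  · obtain ⟨m0, hx0K, hx0f⟩ := hq0'
    have hsub : S' ⊆ (fun p => q0' + p) '' P := by
      intro q hq
      obtain ⟨m, hxK, hxf⟩ := hq
      refine ⟨q - q0', ?_, by ring⟩
      refine ⟨m - m0, ?_, ?_⟩
      all_goals {
        have heq : (((q - q0' : ℤ) : ℝ) • α - fun i => (((m - m0) i : ℤ) : ℝ))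
            = (a + (q : ℝ) • α - fun i => (m i : ℝ))
              - (a + (q0' : ℝ) • α - fun i => (m0 i : ℝ)) := by
          funext i
          simp only [Pi.sub_apply, Pi.add_apply, Pi.smul_apply, smul_eq_mul]
          push_cast
          ring
        rw [heq]
        first
        | (rw [map_sub, hxf, hx0f]; ring)
        | (have := hR hxK hx0K
           rw [dist_eq_norm] at this
           exact this)
      }
    have hfinim : ((fun p => q0' + p) '' P).Finite := hPfin.image _
    constructor
    · exact hfinim.subset hsub
    · calc S'.ncard ≤ ((fun p => q0' + p) '' P).ncard := Set.ncard_le_ncard hsub hfinim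
        _ = P.ncard := Set.ncard_image_of_injective _ (add_right_injective q0')
        _ = hPfin.toFinset.card := Set.ncard_eq_toFinset_card P hPfin
        _ ≤ hPfin.toFinset.card + 1 := Nat.le_succ _
end

section
/- Let K ⊂ ℝ^{d−1} be a finite union of convex polytopes each with nonempty interior. Then for every x in the boundary ∂K there exist a nonzero linear form f and c ∈ ℝ such that the intersection of the hyperplane H_{f,c} = {q : f(q) = c} with ∂K has nonempty interior relative to H_{f,c}, and x lies in the closure of this relative interior. -/
open Set Metric Module Filter

lemma aux_exists_dual {F : Type*} [AddCommGroup F] [Module ℝ F]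
    (V : Submodule ℝ F) (hV : V ≠ ⊤) :
    ∃ f : F →ₗ[ℝ] ℝ, f ≠ 0 ∧ ∀ v ∈ V, f v = 0 := by
  obtain ⟨x, hx⟩ : ∃ x, x ∉ V := by
    by_contra h
    push_neg at h
    exact hV (Submodule.eq_top_iff'.2 h)
  have h : ¬ ∀ φ : Module.Dual ℝ F, φ ∈ V.dualAnnihilator → φ x = 0 := by
    rw [Subspace.forall_mem_dualAnnihilator_apply_eq_zero_iff]
    exact hx
  push_neg at h
  obtain ⟨φ, hφ, hφx⟩ := h
  exact ⟨φ, fun h0 => hφx (by simp [h0]), (Submodule.mem_dualAnnihilator φ).1 hφ⟩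

lemma aux_exists_good {F : Type*} [AddCommGroup F] [Module ℝ F] [Nontrivial F]
    (A : Set F) (hA : affineSpan ℝ A ≠ ⊤) :
    ∃ fc : (F →ₗ[ℝ] ℝ) × ℝ, fc.1 ≠ 0 ∧ ∀ y ∈ A, fc.1 y = fc.2 := by
  rcases A.eq_empty_or_nonempty with rfl | ⟨a, ha⟩
  · obtain ⟨f, hf, -⟩ := aux_exists_dual (⊥ : Submodule ℝ F) bot_ne_top
    exact ⟨(f, 0), hf, by simp⟩
  · have hV : vectorSpan ℝ A ≠ ⊤ := by
      intro h
      apply hA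
      refine AffineSubspace.ext_of_direction_eq ?_ ⟨a, subset_affineSpan ℝ A ha, trivial⟩
      rw [direction_affineSpan, h, AffineSubspace.direction_top]
    obtain ⟨f, hf, hker⟩ := aux_exists_dual (vectorSpan ℝ A) hV
    refine ⟨(f, f a), hf, fun y hy => ?_⟩
    have hmem : y - a ∈ vectorSpan ℝ A := by
      have := vsub_mem_vectorSpan ℝ hy ha
      simpa using this
    have h0 := hker _ hmem
    rw [map_sub] at h0
    simp only at h0 ⊢
    linarith

lemma aux_flat' {E : Type*} [NormedAddCommGroup E] [NormedSpace ℝ E] [FiniteDimensional ℝ E]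
    (K : Set E) (hcl : IsClosed K) (hreg : K ⊆ closure (interior K))
    (f : E →ₗ[ℝ] ℝ) (hf : f ≠ 0) (c : ℝ) (q : E) (hq : q ∈ frontier K) (hqc : f q = c)
    (δ : ℝ) (hδ : 0 < δ) (hloc : ∀ y ∈ frontier K, dist y q < δ → f y = c) :
    ∀ y, f y = c → dist y q < δ → y ∈ frontier K := by
  obtain ⟨u, hu⟩ : ∃ u, f u ≠ 0 := by
    by_contra h; push_neg at h; exact hf (LinearMap.ext fun z => by simp [h z])
  set v : E := (f u)⁻¹ • u with hv
  have hfv : f v = 1 := by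
    rw [hv, map_smul, smul_eq_mul, inv_mul_cancel₀ hu]
  have hvpos : 0 < ‖v‖ := by
    rcases eq_or_lt_of_le (norm_nonneg v) with h0 | h; swap
    · exact h
    · exfalso; rw [eq_comm, norm_eq_zero] at h0; rw [h0, map_zero] at hfv; norm_num at hfv
  have hfc : Continuous f := f.continuous_of_finiteDimensional
  have hfrontier : frontier K = K \ interior K := hcl.frontier_eq
  set P := interior K with hP
  set N := Kᶜ with hN
  have hNopen : IsOpen N := hcl.isOpen_compl
  have hPopen : IsOpen P := isOpen_interior
  have hPN : Disjoint P N := disjoint_compl_right.mono_left interior_subset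
  set U₁ : Set E := ball q δ ∩ f ⁻¹' (Ioi c) with hU₁
  set U₂ : Set E := ball q δ ∩ f ⁻¹' (Iio c) with hU₂
  have hU₁o : IsOpen U₁ := isOpen_ball.inter ((isOpen_Ioi).preimage hfc)
  have hU₂o : IsOpen U₂ := isOpen_ball.inter ((isOpen_Iio).preimage hfc)
  have hU₁c : Convex ℝ U₁ := (convex_ball q δ).inter ((convex_Ioi c).linear_preimage f)
  have hU₂c : Convex ℝ U₂ := (convex_ball q δ).inter ((convex_Iio c).linear_preimage f)
  have key : ∀ w, w ∈ ball q δ → w ∉ frontier K → w ∈ P ∪ N := by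
    intro w _ hw
    rw [hfrontier, mem_diff] at hw
    push_neg at hw
    by_cases hwK : w ∈ K
    · exact Or.inl (hw hwK)
    · exact Or.inr hwK
  have hU₁sub : U₁ ⊆ P ∪ N := by
    rintro w ⟨hwb, hwf⟩
    refine key w hwb fun hwfr => ?_
    have := hloc w hwfr (mem_ball.1 hwb)
    have h2 : c < f w := hwf
    rw [this] at h2; exact lt_irrefl _ h2
  have hU₂sub : U₂ ⊆ P ∪ N := by
    rintro w ⟨hwb, hwf⟩
    refine key w hwb fun hwfr => ?_
    have := hloc w hwfr (mem_ball.1 hwb)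
    have h2 : f w < c := hwf
    rw [this] at h2; exact lt_irrefl _ h2
  have hor₁ : U₁ ⊆ P ∨ U₁ ⊆ N :=
    hU₁c.isPreconnected.subset_or_subset hPopen hNopen hPN hU₁sub
  have hor₂ : U₂ ⊆ P ∨ U₂ ⊆ N :=
    hU₂c.isPreconnected.subset_or_subset hPopen hNopen hPN hU₂sub
  have hclosure : ∀ z, f z = c → dist z q < δ → z ∈ closure U₁ ∧ z ∈ closure U₂ := by
    intro z hz hzq
    have hcont : Continuous (fun t : ℝ => z + t • v) :=
      continuous_const.add (continuous_id.smul continuous_const)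
    have htend0 : Tendsto (fun t : ℝ => z + t • v) (nhds 0) (nhds z) := by
      have := hcont.tendsto 0
      simpa using this
    constructor
    · have htend : Tendsto (fun t : ℝ => z + t • v) (nhdsWithin 0 (Ioi 0)) (nhds z) :=
        htend0.mono_left nhdsWithin_le_nhds
      have hball : ∀ᶠ t : ℝ in nhdsWithin 0 (Ioi 0), z + t • v ∈ ball q δ :=
        htend.eventually (isOpen_ball.eventually_mem (mem_ball.2 hzq))
      have hpos : ∀ᶠ t in nhdsWithin 0 (Ioi 0), (0:ℝ) < t :=
        eventually_mem_nhdsWithin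
      refine mem_closure_of_tendsto htend ((hball.and hpos).mono ?_)
      rintro t ⟨htb, htp⟩
      refine ⟨htb, ?_⟩
      have : f (z + t • v) = c + t := by
        rw [map_add, map_smul, smul_eq_mul, hz, hfv, mul_one]
      simp only [mem_preimage, mem_Ioi, this]
      linarith
    · have htend : Tendsto (fun t : ℝ => z + t • v) (nhdsWithin 0 (Iio 0)) (nhds z) :=
        htend0.mono_left nhdsWithin_le_nhds
      have hball : ∀ᶠ t : ℝ in nhdsWithin 0 (Iio 0), z + t • v ∈ ball q δ :=
        htend.eventually (isOpen_ball.eventually_mem (mem_ball.2 hzq))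
      have hpos : ∀ᶠ t in nhdsWithin 0 (Iio 0), t < (0:ℝ) :=
        eventually_mem_nhdsWithin
      refine mem_closure_of_tendsto htend ((hball.and hpos).mono ?_)
      rintro t ⟨htb, htp⟩
      refine ⟨htb, ?_⟩
      have : f (z + t • v) = c + t := by
        rw [map_add, map_smul, smul_eq_mul, hz, hfv, mul_one]
      simp only [mem_preimage, mem_Iio, this]
      linarith
  have hclP : closure P ⊆ K := closure_minimal interior_subset hcl
  intro y hyc hyq
  rcases hor₁ with h₁P | h₁N
  · rcases hor₂ with h₂P | h₂N
    · exfalso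
      have hballK : ball q δ ⊆ K := by
        intro w hw
        rcases lt_trichotomy (f w) c with hlt | heq | hgt
        · exact interior_subset (h₂P ⟨hw, hlt⟩)
        · exact hclP (closure_mono h₁P (hclosure w heq (mem_ball.1 hw)).1)
        · exact interior_subset (h₁P ⟨hw, hgt⟩)
      have : q ∈ interior K := mem_interior.2 ⟨ball q δ, hballK, isOpen_ball, mem_ball_self hδ⟩
      rw [hfrontier] at hq
      exact hq.2 this
    · -- U₁ ⊆ P, U₂ ⊆ N : mixed
      obtain ⟨hy1, hy2⟩ := hclosure y hyc hyq
      rw [frontier_eq_closure_inter_closure]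
      exact ⟨closure_mono (h₁P.trans interior_subset) hy1, closure_mono h₂N hy2⟩
  · rcases hor₂ with h₂P | h₂N
    · obtain ⟨hy1, hy2⟩ := hclosure y hyc hyq
      rw [frontier_eq_closure_inter_closure]
      exact ⟨closure_mono (h₂P.trans interior_subset) hy2, closure_mono h₁N hy1⟩
    · exfalso
      have hqK : q ∈ K := by rw [hfrontier] at hq; exact hq.1
      have hqcl : q ∈ closure P := hreg hqK
      obtain ⟨y₀, hy₀b, hy₀P⟩ : ∃ y₀, y₀ ∈ ball q δ ∧ y₀ ∈ P := by
        have := (_root_.mem_closure_iff.1 hqcl) (ball q δ) isOpen_ball (mem_ball_self hδ)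
        obtain ⟨y₀, h1, h2⟩ := this
        exact ⟨y₀, h1, h2⟩
      rcases lt_trichotomy (f y₀) c with hlt | heq | hgt
      · exact (h₂N ⟨hy₀b, hlt⟩) (interior_subset hy₀P)
      · obtain ⟨r, hr, hrb⟩ := Metric.isOpen_iff.1 hPopen y₀ hy₀P
        set t := min r (δ - dist y₀ q) / (2 * ‖v‖) with ht
        have hmin : 0 < min r (δ - dist y₀ q) := by
          apply lt_min hr
          have := mem_ball.1 hy₀b
          linarith
        have htpos : 0 < t := by positivity
        have htv : t * ‖v‖ = min r (δ - dist y₀ q) / 2 := by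
          rw [ht, div_mul_eq_mul_div, div_eq_div_iff (mul_pos two_pos hvpos).ne' two_ne_zero]
          ring
        set w := y₀ + t • v with hw
        have hwy : dist w y₀ = t * ‖v‖ := by
          rw [hw, dist_eq_norm]
          simp [norm_smul, abs_of_pos htpos]
        have hwr : w ∈ ball y₀ r := by
          rw [mem_ball, hwy, htv]
          have := min_le_left r (δ - dist y₀ q)
          linarith
        have hwb : w ∈ ball q δ := by
          rw [mem_ball]
          calc dist w q ≤ dist w y₀ + dist y₀ q := dist_triangle _ _ _
          _ < δ := by
            rw [hwy, htv]
            have := min_le_right r (δ - dist y₀ q)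
            linarith
        have hfw : c < f w := by
          have : f w = c + t := by rw [hw, map_add, map_smul, smul_eq_mul, heq, hfv, mul_one]
          rw [this]; linarith
        exact (h₁N ⟨hwb, hfw⟩) (interior_subset (hrb hwr))
      · exact (h₁N ⟨hy₀b, hgt⟩) (interior_subset hy₀P)

lemma aux_cover' {d m : ℕ} (hd : 0 < d) (S : Fin m → Finset (Fin d → ℝ))
    (K : Set (Fin d → ℝ)) (hK : K = ⋃ i, convexHull ℝ (S i : Set (Fin d → ℝ)))
    (hKcl : IsClosed K) :
    ∃ F : Finset (((Fin d → ℝ) →ₗ[ℝ] ℝ) × ℝ), (∀ p ∈ F, p.1 ≠ 0) ∧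
      frontier K ⊆ ⋃ p ∈ F, {y | p.1 y = p.2} := by
  classical
  haveI : Nonempty (Fin d) := ⟨⟨0, hd⟩⟩
  haveI hnt : Nontrivial (Fin d → ℝ) := inferInstance
  obtain ⟨f₀, hf₀, -⟩ := aux_exists_dual (⊥ : Submodule ℝ (Fin d → ℝ)) bot_ne_top
  set g : Finset (Fin d → ℝ) → ((Fin d → ℝ) →ₗ[ℝ] ℝ) × ℝ := fun A =>
    if h : ∃ fc : ((Fin d → ℝ) →ₗ[ℝ] ℝ) × ℝ, fc.1 ≠ 0 ∧ ∀ y ∈ A, fc.1 y = fc.2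
    then h.choose else (f₀, 1) with hg
  have hgne : ∀ A, (g A).1 ≠ 0 := by
    intro A
    by_cases h : ∃ fc : ((Fin d → ℝ) →ₗ[ℝ] ℝ) × ℝ, fc.1 ≠ 0 ∧ ∀ y ∈ A, fc.1 y = fc.2
    · simp only [hg, dif_pos h]
      exact h.choose_spec.1
    · simp only [hg, dif_neg h]
      exact hf₀
  have hgconst : ∀ A : Finset (Fin d → ℝ), affineSpan ℝ (A : Set (Fin d → ℝ)) ≠ ⊤ →
      ∀ y ∈ A, (g A).1 y = (g A).2 := by
    intro A hA
    have hex : ∃ fc : ((Fin d → ℝ) →ₗ[ℝ] ℝ) × ℝ, fc.1 ≠ 0 ∧ ∀ y ∈ A, fc.1 y = fc.2 := by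
      obtain ⟨fc, h1, h2⟩ := aux_exists_good (A : Set (Fin d → ℝ)) hA
      exact ⟨fc, h1, fun y hy => h2 y (by exact_mod_cast hy)⟩
    simp only [hg, dif_pos hex]
    exact hex.choose_spec.2
  refine ⟨(Finset.univ.biUnion fun i : Fin m => (S i).powerset).image g, ?_, ?_⟩
  · intro p hp
    obtain ⟨A, -, rfl⟩ := Finset.mem_image.1 hp
    exact hgne A
  · intro x hx
    have hxK : x ∈ K := by rw [hKcl.frontier_eq] at hx; exact hx.1
    have hxint : x ∉ interior K := by rw [hKcl.frontier_eq] at hx; exact hx.2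
    rw [hK, mem_iUnion] at hxK
    obtain ⟨i, hxi⟩ := hxK
    rw [convexHull_eq_union] at hxi
    simp only [mem_iUnion] at hxi
    obtain ⟨T, hTsub, hTai, hxT⟩ := hxi
    have hTS : T ⊆ S i := Finset.coe_subset.1 hTsub
    have hconvK : convexHull ℝ (T : Set (Fin d → ℝ)) ⊆ K := by
      refine (convexHull_mono hTsub).trans ?_
      rw [hK]
      exact subset_iUnion (fun i => convexHull ℝ (S i : Set (Fin d → ℝ))) i
    have hxintT : x ∉ interior (convexHull ℝ (T : Set (Fin d → ℝ))) :=
      fun h => hxint (interior_mono hconvK h)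
    by_cases hspan : affineSpan ℝ (T : Set (Fin d → ℝ)) = ⊤
    · -- affine basis case
      set b : AffineBasis {y // y ∈ T} ℝ (Fin d → ℝ) :=
        ⟨fun y => (y : Fin d → ℝ), hTai, by rwa [Subtype.range_coe_subtype, Finset.setOf_mem]⟩ with hb
      have hrange : Set.range b = (T : Set (Fin d → ℝ)) := by
        rw [hb]
        exact Subtype.range_coe_subtype.trans (Finset.setOf_mem)
      have hnonneg : ∀ j, 0 ≤ b.coord j x := by
        have hmem : x ∈ convexHull ℝ (Set.range b) := by rwa [hrange]
        rw [b.convexHull_eq_nonneg_coord] at hmem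
        exact hmem
      obtain ⟨j, hj⟩ : ∃ j, b.coord j x = 0 := by
        have hni : x ∉ interior (convexHull ℝ (Set.range b)) := by rwa [hrange]
        rw [b.interior_convexHull] at hni
        simp only [mem_setOf_eq, not_forall, not_lt] at hni
        obtain ⟨j, hjle⟩ := hni
        exact ⟨j, le_antisymm hjle (hnonneg j)⟩
      set A : Finset (Fin d → ℝ) := T.erase (j : Fin d → ℝ) with hA
      have hAsubT : A ⊆ T := Finset.erase_subset _ _
      have hAspan : affineSpan ℝ (A : Set (Fin d → ℝ)) ≠ ⊤ := by
        intro htop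
        have hmem : (j : Fin d → ℝ) ∈ affineSpan ℝ (A : Set (Fin d → ℝ)) := by
          rw [htop]; trivial
        have himg : (A : Set (Fin d → ℝ)) = (fun y : {y // y ∈ T} => (y : Fin d → ℝ)) '' (Set.univ \ {j}) := by
          rw [hA, Finset.coe_erase]
          ext z
          simp only [Set.mem_diff, Finset.mem_coe, Set.mem_image, Set.mem_singleton_iff,
            Set.mem_univ, true_and]
          constructor
          · rintro ⟨hzT, hzj⟩
            exact ⟨⟨z, hzT⟩, fun hc => hzj (by rw [← hc]), rfl⟩
          · rintro ⟨⟨z', hz'⟩, hne, rfl⟩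
            exact ⟨hz', fun hc => hne (Subtype.ext hc)⟩
        rw [himg] at hmem
        exact hTai.notMem_affineSpan_diff j Set.univ hmem
      -- coord j vanishes on A
      have hcoordA : ∀ a ∈ A, b.coord j a = 0 := by
        intro a ha
        have haT : a ∈ T := hAsubT ha
        have hane : j ≠ (⟨a, haT⟩ : {y // y ∈ T}) := by
          intro hc
          have h2 : a ∈ T.erase (j : Fin d → ℝ) := ha
          rw [hc] at h2
          exact Finset.notMem_erase _ _ h2
        have := b.coord_apply_ne hane
        exact this
      have hjT : (j : Fin d → ℝ) ∈ T := j.2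
      -- dimension bookkeeping
      have hcardT : T.card = d + 1 := by
        have := b.card_eq_finrank_add_one
        rwa [Fintype.card_coe, Module.finrank_fin_fun] at this
      have hcardA : A.card = d := by
        rw [hA, Finset.card_erase_of_mem hjT, hcardT]
        omega
      have hAai : AffineIndependent ℝ ((↑) : {y // y ∈ A} → (Fin d → ℝ)) :=
        AffineIndependent.mono (t := (T : Set (Fin d → ℝ))) hTai (Finset.coe_subset.2 hAsubT)
      have hrangeA : Set.range ((↑) : {y // y ∈ A} → (Fin d → ℝ)) = (A : Set (Fin d → ℝ)) :=
        Subtype.range_coe_subtype.trans (Finset.setOf_mem)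
      have hfinA : Module.finrank ℝ (vectorSpan ℝ (A : Set (Fin d → ℝ))) = d - 1 := by
        have h := hAai.finrank_vectorSpan (n := d - 1)
          (by rw [Fintype.card_coe, hcardA]; omega)
        rwa [hrangeA] at h
      set φ := (b.coord j).linear with hφ
      have hφne : φ ≠ 0 := by
        intro h0
        have h1 := AffineMap.linearMap_vsub (b.coord j) (b j) x
        rw [← hφ, h0] at h1
        simp only [LinearMap.zero_apply, b.coord_apply_eq, hj] at h1
        rw [vsub_eq_sub, sub_zero] at h1
        exact one_ne_zero h1.symm
      have hφker : Module.finrank ℝ (LinearMap.ker φ) = d - 1 := by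
        have h2 := Module.Dual.finrank_ker_add_one_of_ne_zero hφne
        rw [Module.finrank_fin_fun] at h2
        omega
      have hspanker : vectorSpan ℝ (A : Set (Fin d → ℝ)) = LinearMap.ker φ := by
        apply Submodule.eq_of_le_of_finrank_le
        · rw [vectorSpan_def, Submodule.span_le]
          rintro w ⟨a1, ha1, a2, ha2, rfl⟩
          have h1 : b.coord j a1 = 0 := hcoordA a1 (Finset.mem_coe.1 ha1)
          have h2 : b.coord j a2 = 0 := hcoordA a2 (Finset.mem_coe.1 ha2)
          have h3 := AffineMap.linearMap_vsub (b.coord j) a1 a2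
          rw [h1, h2] at h3
          simp only [SetLike.mem_coe, LinearMap.mem_ker]
          rw [hφ, h3]
          simp
        · rw [hfinA, hφker]
      have hAne : A.Nonempty := by
        rw [← Finset.card_pos, hcardA]; exact hd
      obtain ⟨a, haA⟩ := hAne
      have hconstA := hgconst A hAspan
      have hfvan : vectorSpan ℝ (A : Set (Fin d → ℝ)) ≤ LinearMap.ker (g A).1 := by
        rw [vectorSpan_def, Submodule.span_le]
        rintro w ⟨a1, ha1, a2, ha2, rfl⟩
        simp only [SetLike.mem_coe, LinearMap.mem_ker, vsub_eq_sub, map_sub]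
        rw [hconstA a1 (Finset.mem_coe.1 ha1), hconstA a2 (Finset.mem_coe.1 ha2), sub_self]
      have hxa : x - a ∈ LinearMap.ker φ := by
        simp only [LinearMap.mem_ker, hφ]
        have h4 := AffineMap.linearMap_vsub (b.coord j) x a
        rw [hj, hcoordA a haA] at h4
        simpa using h4
      rw [← hspanker] at hxa
      have hfx : (g A).1 x = (g A).2 := by
        have h0 : (g A).1 (x - a) = 0 := hfvan hxa
        rw [map_sub] at h0
        have h1 : (g A).1 a = (g A).2 := hconstA a haA
        linarith
      refine mem_iUnion₂.2 ⟨g A, ?_, hfx⟩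
      apply Finset.mem_image_of_mem
      simp only [Finset.mem_biUnion, Finset.mem_univ, true_and]
      exact ⟨i, Finset.mem_powerset.2 (hAsubT.trans hTS)⟩
    · -- non-spanning case
      have hconst := hgconst T hspan
      have hfT := hgne T
      have hconv : Convex ℝ {y : Fin d → ℝ | (g T).1 y = (g T).2} := by
        intro y hy z hz a c ha hc hac
        simp only [mem_setOf_eq] at hy hz ⊢
        simp [map_add, map_smul, smul_eq_mul, hy, hz, ← add_mul, hac]
      have hsub2 : convexHull ℝ (T : Set (Fin d → ℝ)) ⊆ {y : Fin d → ℝ | (g T).1 y = (g T).2} :=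
        convexHull_min (fun y hy => hconst y (by exact_mod_cast hy)) hconv
      have hxmem : (g T).1 x = (g T).2 := hsub2 hxT
      refine mem_iUnion₂.2 ⟨g T, ?_, hxmem⟩
      apply Finset.mem_image_of_mem
      simp only [Finset.mem_biUnion, Finset.mem_univ, true_and]
      exact ⟨i, Finset.mem_powerset.2 hTS⟩

lemma aux_reg' {E : Type*} [NormedAddCommGroup E] [NormedSpace ℝ E]
    {C : Set E} (hC : Convex ℝ C) {w z : E} (hw : w ∈ interior C) (hz : z ∈ C) :
    z ∈ closure (interior C) := by
  have hcont : Continuous (fun t : ℝ => t • w + (1 - t) • z) := by fun_prop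
  have htend : Filter.Tendsto (fun t : ℝ => t • w + (1 - t) • z)
      (nhdsWithin 0 (Ioi 0)) (nhds z) := by
    have h0 := hcont.tendsto 0
    simp only [zero_smul, sub_zero, one_smul, zero_add] at h0
    exact h0.mono_left nhdsWithin_le_nhds
  refine mem_closure_of_tendsto htend ?_
  have hev : ∀ᶠ t : ℝ in nhdsWithin 0 (Ioi 0), t ∈ Ioo (0:ℝ) 1 :=
    Ioo_mem_nhdsGT one_pos
  refine hev.mono fun t ht => ?_
  exact hC.combo_interior_closure_mem_interior hw (subset_closure hz) ht.1
    (by linarith [ht.2]) (by ring)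

theorem boundary_point_in_closure_of_facet_relative_interior {d m : ℕ}
    (S : Fin m → Finset (Fin d → ℝ))
    (hint : ∀ i, (interior (convexHull ℝ (S i : Set (Fin d → ℝ)))).Nonempty)
    (K : Set (Fin d → ℝ)) (hK : K = ⋃ i, convexHull ℝ (S i : Set (Fin d → ℝ)))
    (x : Fin d → ℝ) (hx : x ∈ frontier K) :
    ∃ (f : (Fin d → ℝ) →ₗ[ℝ] ℝ) (c : ℝ), f ≠ 0 ∧
      -- `R` is the interior of `H_{f,c} ∩ ∂K` relative to the hyperplane `H_{f,c}`
      {q : Fin d → ℝ | f q = c ∧ q ∈ frontier K ∧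
          ∃ ε > (0:ℝ), ∀ y : Fin d → ℝ, f y = c → dist y q < ε → y ∈ frontier K}.Nonempty ∧
      x ∈ closure {q : Fin d → ℝ | f q = c ∧ q ∈ frontier K ∧
          ∃ ε > (0:ℝ), ∀ y : Fin d → ℝ, f y = c → dist y q < ε → y ∈ frontier K} := by
  classical
  have hKcl : IsClosed K := by
    rw [hK]
    exact isClosed_iUnion_of_finite fun i =>
      ((S i).finite_toSet.isCompact_convexHull ℝ).isClosed
  rcases Nat.eq_zero_or_pos d with hd0 | hd
  · exfalso
    subst hd0
    haveI : Subsingleton (Fin 0 → ℝ) :=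
      ⟨fun a b => funext fun i => absurd i.2 (by omega)⟩
    have hxK : x ∈ K := (hKcl.frontier_eq ▸ hx).1
    have hKuniv : K = Set.univ := by
      ext y
      simp only [Set.mem_univ, iff_true]
      rwa [Subsingleton.elim y x]
    rw [hKuniv, frontier_univ] at hx
    exact hx
  have hreg : K ⊆ closure (interior K) := by
    intro z hz
    rw [hK, mem_iUnion] at hz
    obtain ⟨i, hzi⟩ := hz
    obtain ⟨w, hw⟩ := hint i
    have h1 : z ∈ closure (interior (convexHull ℝ (S i : Set (Fin d → ℝ)))) :=
      aux_reg' (convex_convexHull ℝ _) hw hzi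
    refine closure_mono (interior_mono ?_) h1
    rw [hK]
    exact subset_iUnion (fun i => convexHull ℝ (S i : Set (Fin d → ℝ))) i
  obtain ⟨F, hF0, hFcov⟩ := aux_cover' hd S K hK hKcl
  set R : (((Fin d → ℝ) →ₗ[ℝ] ℝ) × ℝ) → Set (Fin d → ℝ) := fun p =>
    {q | p.1 q = p.2 ∧ q ∈ frontier K ∧
      ∃ ε > (0:ℝ), ∀ y : Fin d → ℝ, p.1 y = p.2 → dist y q < ε → y ∈ frontier K} with hR
  have key : ∀ r : ℝ, 0 < r → ∃ p ∈ F, ∃ q ∈ R p, dist x q < r := by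
    intro r hr
    set C : Set (Fin d → ℝ) := frontier K ∩ closedBall x (r/2) with hC
    have hCcl : IsClosed C := isClosed_frontier.inter Metric.isClosed_closedBall
    have hxC : x ∈ C := ⟨hx, mem_closedBall_self (by linarith)⟩
    haveI : Nonempty C := ⟨⟨x, hxC⟩⟩
    haveI : CompleteSpace C := hCcl.completeSpace_coe
    set A : F → Set C := fun p =>
      {y : C | (p : (((Fin d → ℝ) →ₗ[ℝ] ℝ) × ℝ)).1 ↑y = (p : (((Fin d → ℝ) →ₗ[ℝ] ℝ) × ℝ)).2}
      with hA
    have hAcl : ∀ p, IsClosed (A p) := by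
      intro p
      have hc : Continuous fun y : C => (p : (((Fin d → ℝ) →ₗ[ℝ] ℝ) × ℝ)).1 (↑y : Fin d → ℝ) :=
        ((p : (((Fin d → ℝ) →ₗ[ℝ] ℝ) × ℝ)).1.continuous_of_finiteDimensional).comp
          continuous_subtype_val
      exact isClosed_eq hc continuous_const
    have hAun : ⋃ p, A p = Set.univ := by
      ext y
      simp only [mem_iUnion, mem_univ, iff_true]
      have h2 := hFcov y.2.1
      rw [mem_iUnion₂] at h2
      obtain ⟨p, hpF, hpy⟩ := h2
      exact ⟨⟨p, hpF⟩, hpy⟩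
    have hdense := dense_iUnion_interior_of_closed hAcl hAun
    have hVopen : IsOpen {y : C | dist (↑y : Fin d → ℝ) x < r/2} := by
      have hc : Continuous fun y : C => dist (↑y : Fin d → ℝ) x :=
        continuous_subtype_val.dist continuous_const
      exact isOpen_lt hc continuous_const
    have hVne : {y : C | dist (↑y : Fin d → ℝ) x < r/2}.Nonempty :=
      ⟨⟨x, hxC⟩, by simpa using by linarith⟩
    obtain ⟨y, hy1, hy2⟩ := hdense.exists_mem_open hVopen hVne
    rw [mem_iUnion] at hy1
    obtain ⟨p, hyp⟩ := hy1
    obtain ⟨ε, hε, hball⟩ := Metric.mem_nhds_iff.1 (mem_interior_iff_mem_nhds.1 hyp)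
    set q : Fin d → ℝ := ↑y with hq
    have hqfr : q ∈ frontier K := y.2.1
    have hqx : dist q x < r/2 := hy2
    set δ := min ε (r/2 - dist q x) with hδdef
    have hδpos : 0 < δ := lt_min hε (by linarith)
    have hloc : ∀ z ∈ frontier K,
        dist z q < δ → (p : (((Fin d → ℝ) →ₗ[ℝ] ℝ) × ℝ)).1 z =
          (p : (((Fin d → ℝ) →ₗ[ℝ] ℝ) × ℝ)).2 := by
      intro z hz hzq
      have hd1 : dist z q < r/2 - dist q x := lt_of_lt_of_le hzq (min_le_right _ _)
      have hzC : z ∈ C := ⟨hz, mem_closedBall.2 (by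
        calc dist z x ≤ dist z q + dist q x := dist_triangle _ _ _
        _ ≤ r/2 := by linarith)⟩
      have hzb : (⟨z, hzC⟩ : C) ∈ Metric.ball y ε := by
        rw [mem_ball, Subtype.dist_eq]
        exact lt_of_lt_of_le hzq (min_le_left _ _)
      exact hball hzb
    have hymem : y ∈ A p := interior_subset hyp
    have hqc : (p : (((Fin d → ℝ) →ₗ[ℝ] ℝ) × ℝ)).1 q =
        (p : (((Fin d → ℝ) →ₗ[ℝ] ℝ) × ℝ)).2 := hymem
    have hflat := aux_flat' K hKcl hreg
      (p : (((Fin d → ℝ) →ₗ[ℝ] ℝ) × ℝ)).1 (hF0 p p.2)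
      (p : (((Fin d → ℝ) →ₗ[ℝ] ℝ) × ℝ)).2 q hqfr hqc δ hδpos hloc
    refine ⟨p, p.2, q, ⟨hqc, hqfr, δ, hδpos, fun z hz1 hz2 => hflat z hz1 hz2⟩, ?_⟩
    rw [dist_comm]
    linarith
  have hx_closure : x ∈ closure (⋃ p ∈ F, R p) := by
    rw [Metric.mem_closure_iff]
    intro ε hε
    obtain ⟨p, hpF, q, hqR, hdq⟩ := key ε hε
    exact ⟨q, mem_iUnion₂.2 ⟨p, hpF, hqR⟩, hdq⟩
  rw [Finset.closure_biUnion, mem_iUnion₂] at hx_closure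
  obtain ⟨p, hpF, hxp⟩ := hx_closure
  refine ⟨p.1, p.2, hF0 p hpF, ?_, hxp⟩
  by_contra h
  rw [Set.not_nonempty_iff_eq_empty] at h
  have : R p = ∅ := h
  rw [this, closure_empty] at hxp
  exact hxp
end

section
/- Let α = (α_1,…,α_d) ∈ (0,1)^d be a totally irrational frequency vector, and let C, C' be real numbers with C, C' ≥ 1 − 1/d, C ≤ 1, and C + C' ≥ 2 − (1 + min_i α_i)/(d−1). Let T̂ be the Tijdeman map on 1^⊥ ∩ [−C', ∞)^d defined by T̂(x) = x + α − e_i when x ∈ S_i, where S_i is the set of x = (x_1,…,x_d) ∈ 1^⊥ ∩ [−C',∞)^d with x_i + α_i − 1 ≥ −C' and (C − x_i)/α_i ≤ (C − x_j)/α_j for all j with x_j + α_j − 1 ≥ −C' (ties broken by smallest index). Then for every starting point x₀ ∈ [C−1, C]^d ∩ 1^⊥, all iterates T̂^n(x₀), n ∈ ℕ, lie in [−C', C]^d. -/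
/-- The piece `S_{α,C,C',i}` of Tijdeman's construction, as a predicate on points of
`1^⊥ ∩ [-C',∞)^d`. -/
def inS {d : ℕ} (α : Fin d → ℝ) (C C' : ℝ) (i : Fin d) (x : Fin d → ℝ) : Prop :=
  (∑ j, x j = 0) ∧ (∀ j, -C' ≤ x j) ∧ (-C' ≤ x i + α i - 1) ∧
    ∀ j : Fin d, -C' ≤ x j + α j - 1 → (C - x i) / α i ≤ (C - x j) / α j

/-- Invariant for Tijdeman's construction: zero sum, box bounds, and the
"earliest deadline first" demand bound at every integer horizon. -/
abbrev TijQ {d : ℕ} (α : Fin d → ℝ) (C C' : ℝ) (x : Fin d → ℝ) : Prop :=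
  (∑ j, x j = 0) ∧ (∀ j, -C' ≤ x j) ∧ (∀ j, x j ≤ C) ∧
    ∀ h : ℕ, 1 ≤ h → (∑ j, max 0 ⌈x j + (h : ℝ) * α j - C⌉) ≤ (h : ℤ)

private lemma tij_max_lt (v b : ℝ) (hb : 0 < b) (hvb : 0 < v → v + 1 ≤ b) :
    max (0 : ℝ) ((⌈v⌉ : ℤ) : ℝ) < b := by
  refine max_lt hb ?_
  rcases le_or_gt v 0 with hv | hv
  · have h1 : (⌈v⌉ : ℤ) ≤ 0 := Int.ceil_le.mpr (by exact_mod_cast hv)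
    have h0 : ((⌈v⌉ : ℤ) : ℝ) ≤ 0 := by exact_mod_cast h1
    linarith
  · exact lt_of_lt_of_le (Int.ceil_lt_add_one v) (hvb hv)

private lemma tijQ_base {d : ℕ} (hd : 2 ≤ d) (α : Fin d → ℝ)
    (hαpos : ∀ i, 0 < α i) (hsum : ∑ i, α i = 1) (C C' : ℝ)
    (hC1 : 1 - 1/(d:ℝ) ≤ C) (hCC1 : 1 ≤ C + C')
    (x : Fin d → ℝ) (hx0 : ∑ j, x j = 0) (hbox : ∀ j, C - 1 ≤ x j ∧ x j ≤ C) :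
    TijQ α C C' x := by
  haveI : Nonempty (Fin d) := ⟨⟨0, by omega⟩⟩
  have hdR : (2:ℝ) ≤ (d:ℝ) := by exact_mod_cast hd
  have hdC : (d:ℝ) - 1 ≤ (d:ℝ) * C := by
    have h1 : (d:ℝ) * (1 - 1/(d:ℝ)) ≤ (d:ℝ) * C :=
      mul_le_mul_of_nonneg_left hC1 (by linarith)
    have h2 : (d:ℝ) * (1 - 1/(d:ℝ)) = (d:ℝ) - 1 := by
      field_simp
    linarith
  refine ⟨hx0, fun j => by linarith [(hbox j).1], fun j => (hbox j).2, ?_⟩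
  intro h hh
  have hh1 : (1:ℝ) ≤ (h:ℝ) := by exact_mod_cast hh
  have hR : ((∑ j, max 0 ⌈x j + (h:ℝ) * α j - C⌉ : ℤ) : ℝ) < (h:ℝ) + 1 := by
    push_cast
    have hlt : ∀ j ∈ Finset.univ, max (0:ℝ) ((⌈x j + (h:ℝ) * α j - C⌉ : ℤ) : ℝ)
        < (h:ℝ) * α j + (1 - C + x j) := by
      intro j _
      refine tij_max_lt _ _ ?_ ?_
      · have h1 : 0 < (h:ℝ) * α j := mul_pos (by linarith) (hαpos j)
        have := (hbox j).1; linarith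
      · intro _; linarith
    refine lt_of_lt_of_le (Finset.sum_lt_sum_of_nonempty Finset.univ_nonempty hlt) ?_
    have hsplit : ∑ j, ((h:ℝ) * α j + (1 - C + x j))
        = (h:ℝ) * (∑ j, α j) + (((Finset.univ : Finset (Fin d)).card : ℝ) * (1 - C)
            + ∑ j, x j) := by
      rw [Finset.sum_add_distrib, Finset.mul_sum, Finset.sum_add_distrib,
        Finset.sum_const, nsmul_eq_mul]
    have hcard : ((Finset.univ : Finset (Fin d)).card : ℝ) = (d:ℝ) := by simp
    rw [hsplit, hsum, hx0, hcard]
    have hexp : (d:ℝ) * (1 - C) = (d:ℝ) - (d:ℝ) * C := by ring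
    linarith
  have hZ : (∑ j, max 0 ⌈x j + (h:ℝ) * α j - C⌉ : ℤ) < (h:ℤ) + 1 := by exact_mod_cast hR
  omega

private lemma tijQ_step {d : ℕ} (hd : 2 ≤ d) (α : Fin d → ℝ)
    (hαpos : ∀ i, 0 < α i) (hαlt : ∀ i, α i < 1) (hsum : ∑ i, α i = 1)
    (C C' : ℝ) (hC2 : C ≤ 1) (hCC1 : 1 ≤ C + C')
    (hκCC : 2 - C - C' ≤ (1 + ⨅ i, α i) / ((d:ℝ) - 1))
    (i : Fin d) (x : Fin d → ℝ) (hx : TijQ α C C' x)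
    (hi1 : -C' ≤ x i + α i - 1)
    (hi2 : ∀ j : Fin d, -C' ≤ x j + α j - 1 → (C - x i) / α i ≤ (C - x j) / α j) :
    TijQ α C C' (fun j => x j + α j - if j = i then 1 else 0) := by
  haveI : Nonempty (Fin d) := ⟨⟨0, by omega⟩⟩
  obtain ⟨hx1, hx2, hx3, hx4⟩ := hx
  have hdR : (2:ℝ) ≤ (d:ℝ) := by exact_mod_cast hd
  set m := ⨅ i, α i with hmdef
  set κ := (1 + m) / ((d:ℝ) - 1) with hκdef
  have hm0 : 0 ≤ m := le_ciInf fun j => (hαpos j).le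
  have hmle : m ≤ α i := ciInf_le (Set.Finite.bddBelow (Set.finite_range α)) i
  have hκ0 : 0 ≤ κ := div_nonneg (by linarith) (by linarith)
  have hdne : (d:ℝ) - 1 ≠ 0 := by linarith
  have hκd : ((d:ℝ) - 1) * κ = 1 + m := by
    rw [hκdef, mul_comm]
    exact div_mul_cancel₀ _ hdne
  -- upper bounds after the step
  have hub : ∀ j, (x j + α j - if j = i then (1:ℝ) else 0) ≤ C := by
    intro j
    by_cases hji : j = i
    · subst hji
      rw [if_pos rfl]
      have := hx3 j
      have := hαlt j
      linarith
    · rw [if_neg hji, sub_zero]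
      by_contra hc
      push_neg at hc
      have hadm : -C' ≤ x j + α j - 1 := by linarith
      have hj1 : (C - x j) / α j < 1 := (div_lt_one (hαpos j)).mpr (by linarith)
      have hi1' : (C - x i) / α i < 1 := lt_of_le_of_lt (hi2 j hadm) hj1
      have hxi : C - x i < α i := (div_lt_one (hαpos i)).mp hi1'
      have hD1 := hx4 1 le_rfl
      have h11 : ((1:ℕ):ℤ) = 1 := by norm_num
      rw [h11] at hD1
      have hti : (1:ℤ) ≤ max 0 ⌈x i + ((1:ℕ):ℝ) * α i - C⌉ := by
        have hv : (0:ℝ) < x i + ((1:ℕ):ℝ) * α i - C := by push_cast; linarith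
        have h0 : (0:ℤ) < ⌈x i + ((1:ℕ):ℝ) * α i - C⌉ := Int.ceil_pos.mpr hv
        exact le_max_of_le_right (by omega)
      have htj : (1:ℤ) ≤ max 0 ⌈x j + ((1:ℕ):ℝ) * α j - C⌉ := by
        have hv : (0:ℝ) < x j + ((1:ℕ):ℝ) * α j - C := by push_cast; linarith
        have h0 : (0:ℤ) < ⌈x j + ((1:ℕ):ℝ) * α j - C⌉ := Int.ceil_pos.mpr hv
        exact le_max_of_le_right (by omega)
      have hij : i ≠ j := fun e => hji e.symm
      have hpair := Finset.sum_pair (f := fun k => max 0 ⌈x k + ((1:ℕ):ℝ) * α k - C⌉) hij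
      have hmono := Finset.sum_le_sum_of_subset_of_nonneg
        (Finset.subset_univ ({i, j} : Finset (Fin d)))
        (fun k _ _ => le_max_left (0:ℤ) ⌈x k + ((1:ℕ):ℝ) * α k - C⌉)
      rw [hpair] at hmono
      linarith
  refine ⟨?_, ?_, hub, ?_⟩
  · -- zero sum
    rw [Finset.sum_sub_distrib, Finset.sum_add_distrib, hx1, hsum,
      Finset.sum_ite_eq' Finset.univ i (fun _ => (1:ℝ))]
    simp
  · -- lower bounds
    intro j
    dsimp only
    by_cases hji : j = i
    · subst hji
      rw [if_pos rfl]
      linarith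
    · rw [if_neg hji, sub_zero]
      have := hx2 j
      have := hαpos j
      linarith
  · -- demand bound
    intro h hh
    dsimp only
    have hh1 : (1:ℝ) ≤ (h:ℝ) := by exact_mod_cast hh
    rcases lt_or_ge C (x i + ((h:ℝ) + 1) * α i) with hwi | hwi
    · -- case A : the served coordinate contributes at horizon h+1
      have hkey : ∀ j, max 0 ⌈(x j + α j - if j = i then (1:ℝ) else 0) + (h:ℝ) * α j - C⌉
          = max 0 ⌈x j + (((h+1) : ℕ) : ℝ) * α j - C⌉ - (if j = i then 1 else 0) := by
        intro j
        by_cases hji : j = i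
        · subst hji
          rw [if_pos rfl, if_pos rfl]
          have e1 : (x j + α j - (1:ℝ)) + (h:ℝ) * α j - C
              = (x j + (((h+1) : ℕ) : ℝ) * α j - C) - 1 := by push_cast; ring
          rw [e1, Int.ceil_sub_one]
          have h1 : (1:ℤ) ≤ ⌈x j + (((h+1) : ℕ) : ℝ) * α j - C⌉ :=
            Int.ceil_pos.mpr (by push_cast; linarith)
          rw [max_eq_right (by omega : (0:ℤ) ≤ ⌈x j + (((h+1) : ℕ) : ℝ) * α j - C⌉ - 1),
            max_eq_right (by omega : (0:ℤ) ≤ ⌈x j + (((h+1) : ℕ) : ℝ) * α j - C⌉)]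
        · rw [if_neg hji, if_neg hji, sub_zero, sub_zero]
          have e1 : (x j + α j) + (h:ℝ) * α j - C = x j + (((h+1) : ℕ) : ℝ) * α j - C := by
            push_cast; ring
          rw [e1]
      calc (∑ j, max 0 ⌈(x j + α j - if j = i then (1:ℝ) else 0) + (h:ℝ) * α j - C⌉)
          = ∑ j, (max 0 ⌈x j + (((h+1) : ℕ) : ℝ) * α j - C⌉ - (if j = i then 1 else 0)) :=
            Finset.sum_congr rfl fun j _ => hkey j
        _ = (∑ j, max 0 ⌈x j + (((h+1) : ℕ) : ℝ) * α j - C⌉)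
              - ∑ j, (if j = i then (1:ℤ) else 0) := Finset.sum_sub_distrib _ _
        _ ≤ (h:ℤ) := by
            rw [Finset.sum_ite_eq' Finset.univ i (fun _ => (1:ℤ)), if_pos (Finset.mem_univ i)]
            have hxh := hx4 (h+1) (by omega)
            have hcast : (((h+1) : ℕ) : ℤ) = (h:ℤ) + 1 := by push_cast; ring
            rw [hcast] at hxh
            omega
    · -- case B : the served coordinate has deadline beyond h+1
      have hti : max 0 ⌈(x i + α i - if i = i then (1:ℝ) else 0) + (h:ℝ) * α i - C⌉ = 0 := by
        rw [if_pos rfl]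
        have hv : (x i + α i - 1) + (h:ℝ) * α i - C ≤ 0 := by nlinarith [hαpos i]
        have hc : ⌈(x i + α i - 1) + (h:ℝ) * α i - C⌉ ≤ 0 :=
          Int.ceil_le.mpr (by exact_mod_cast hv)
        exact max_eq_left hc
      rw [← Finset.sum_erase_add Finset.univ _ (Finset.mem_univ i), hti, add_zero]
      have hR : ((∑ j ∈ Finset.univ.erase i,
            max 0 ⌈(x j + α j - if j = i then (1:ℝ) else 0) + (h:ℝ) * α j - C⌉ : ℤ) : ℝ)
          < (h:ℝ) + 1 := by
        push_cast
        have hne : (Finset.univ.erase i).Nonempty := by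
          obtain ⟨j, hj⟩ := Fintype.exists_ne_of_one_lt_card
            (by rw [Fintype.card_fin]; omega) i
          exact ⟨j, Finset.mem_erase.mpr ⟨hj, Finset.mem_univ j⟩⟩
        have hlt : ∀ j ∈ Finset.univ.erase i,
            max (0:ℝ) ((⌈(x j + α j - if j = i then (1:ℝ) else 0) + (h:ℝ) * α j - C⌉ : ℤ) : ℝ)
              < (h:ℝ) * α j + κ := by
          intro j hj
          have hji : j ≠ i := (Finset.mem_erase.mp hj).1
          rw [if_neg hji, sub_zero]
          refine tij_max_lt _ _ ?_ ?_
          · have h1 : 0 < (h:ℝ) * α j := mul_pos (by linarith) (hαpos j)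
            linarith
          · intro hv
            by_cases hadm : -C' ≤ x j + α j - 1
            · exfalso
              have hdi : ((h:ℝ) + 1) ≤ (C - x i) / α i :=
                (le_div_iff₀ (hαpos i)).mpr (by linarith)
              have hdj : ((h:ℝ) + 1) ≤ (C - x j) / α j := le_trans hdi (hi2 j hadm)
              have hj2 : ((h:ℝ) + 1) * α j ≤ C - x j := (le_div_iff₀ (hαpos j)).mp hdj
              nlinarith
            · push_neg at hadm
              linarith
        refine lt_of_lt_of_le (Finset.sum_lt_sum_of_nonempty hne hlt) ?_
        have e1 : ∑ j ∈ Finset.univ.erase i, ((h:ℝ) * α j + κ)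
            = (∑ j, ((h:ℝ) * α j + κ)) - ((h:ℝ) * α i + κ) := by
          rw [← Finset.sum_erase_add Finset.univ _ (Finset.mem_univ i)]
          ring
        have e2 : ∑ j, ((h:ℝ) * α j + κ) = (h:ℝ) + (d:ℝ) * κ := by
          rw [Finset.sum_add_distrib, ← Finset.mul_sum, hsum, mul_one, Finset.sum_const,
            Finset.card_univ, Fintype.card_fin, nsmul_eq_mul]
        have hαm : α i ≤ (h:ℝ) * α i := by nlinarith [hαpos i]
        rw [e1, e2]
        nlinarith [hκd, hmle, hαm]
      have hZ : (∑ j ∈ Finset.univ.erase i,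
            max 0 ⌈(x j + α j - if j = i then (1:ℝ) else 0) + (h:ℝ) * α j - C⌉ : ℤ)
          < (h:ℤ) + 1 := by exact_mod_cast hR
      omega

theorem tijdeman_iterates_stay_in_box {d : ℕ} (hd : 2 ≤ d)
    (α : Fin d → ℝ) (hα : ∀ i, α i ∈ Set.Ioo (0:ℝ) 1) (hsum : ∑ i, α i = 1)
    (hirr : LinearIndependent ℚ α)
    (C C' : ℝ) (hC1 : 1 - 1/(d:ℝ) ≤ C) (hC'1 : 1 - 1/(d:ℝ) ≤ C') (hC2 : C ≤ 1)
    (hCC' : 2 - (1 + ⨅ i, α i) / ((d:ℝ) - 1) ≤ C + C')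
    (T : (Fin d → ℝ) → (Fin d → ℝ))
    -- `T` is the Tijdeman map: on `1^⊥ ∩ [-C',∞)^d` it translates by `α - e_i`
    -- where `i` is the smallest index with `x ∈ S_{α,C,C',i}`
    (hT : ∀ x : Fin d → ℝ, (∑ i, x i = 0) → (∀ i, -C' ≤ x i) →
      ∃ i : Fin d, inS α C C' i x ∧ (∀ j : Fin d, inS α C C' j x → i ≤ j) ∧
        T x = x + α - Pi.single i 1) :
    ∀ x₀ : Fin d → ℝ, (∑ i, x₀ i = 0) → (∀ i, x₀ i ∈ Set.Icc (C - 1) C) →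
      ∀ (n : ℕ) (i : Fin d), (T^[n] x₀) i ∈ Set.Icc (-C') C := by
  intro x₀ hx₀sum hx₀box n i
  haveI : Nonempty (Fin d) := ⟨⟨0, by omega⟩⟩
  have hαpos : ∀ i, 0 < α i := fun i => (hα i).1
  have hαlt : ∀ i, α i < 1 := fun i => (hα i).2
  have hdR : (2:ℝ) ≤ (d:ℝ) := by exact_mod_cast hd
  have hdinv : 1/(d:ℝ) ≤ 1/2 := by
    apply one_div_le_one_div_of_le <;> linarith
  have hCC1 : 1 ≤ C + C' := by linarith
  have hQ : ∀ n, TijQ α C C' (T^[n] x₀) := by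
    intro n
    induction n with
    | zero =>
        rw [Function.iterate_zero_apply]
        exact tijQ_base hd α hαpos hsum C C' hC1 hCC1 x₀ hx₀sum
          (fun j => Set.mem_Icc.mp (hx₀box j))
    | succ n ih =>
        rw [Function.iterate_succ_apply']
        obtain ⟨i', hiS, -, hTx⟩ := hT _ ih.1 ih.2.1
        obtain ⟨-, -, hi1, hi2⟩ := hiS
        have hTeq : T (T^[n] x₀)
            = fun j => (T^[n] x₀) j + α j - if j = i' then 1 else 0 := by
          rw [hTx]; funext j; simp [Pi.single_apply]
        rw [hTeq]
        exact tijQ_step hd α hαpos hαlt hsum C C' hC2 hCC1 (by linarith) i' _ ih hi1 hi2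
  exact Set.mem_Icc.mpr ⟨(hQ n).2.1 i, (hQ n).2.2.1 i⟩
end

section
/- Let α ∈ (0,1)^d with Σ α_i = 1. Taking x₀ = (1/2)π_α(1) = (1/2)(1 − dα) as initial point, for every i the i-th coordinate of y − x₀, as y ranges over E_α = π_α([0,1]^d), takes all values in the interval [−(1 + (d−2)α_i)/2, (1 + (d−2)α_i)/2]; consequently sup_{y∈E_α} ‖y − x₀‖_∞ = (1 + (d−2)‖α‖_∞)/2. -/
lemma piAlpha_apply {d : ℕ} (α x : Fin d → ℝ) (i : Fin d) :
    piAlpha α x i = x i - (∑ j, x j) * α i := by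
  simp [piAlpha, smul_eq_mul]

lemma coord_bound {d : ℕ} (hd : 2 ≤ d) (α : Fin d → ℝ)
    (hα : ∀ i, α i ∈ Set.Ioo (0:ℝ) 1)
    (y : Fin d → ℝ) (hy : y ∈ Set.Icc (0 : Fin d → ℝ) 1) (i : Fin d) :
    |piAlpha α y i - (1 - (d:ℝ) * α i) / 2| ≤ (1 + ((d:ℝ) - 2) * α i) / 2 := by
  obtain ⟨hy0, hy1⟩ := hy
  have h0 : 0 ≤ y i := hy0 i
  have h1 : y i ≤ 1 := hy1 i
  have hαi := hα i
  have hsplit : ∑ j, y j = y i + ∑ j ∈ Finset.univ.erase i, y j :=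
    (Finset.add_sum_erase _ _ (Finset.mem_univ i)).symm
  set S := ∑ j ∈ Finset.univ.erase i, y j with hS
  have hS0 : 0 ≤ S := Finset.sum_nonneg fun j _ => hy0 j
  have hd1 : 1 ≤ d := le_trans (by norm_num) hd
  have hSle : S ≤ (d:ℝ) - 1 := by
    have h := Finset.sum_le_card_nsmul (Finset.univ.erase i) y 1 (fun j _ => hy1 j)
    have hcard : (Finset.univ.erase i).card = d - 1 := by
      simp [Finset.card_erase_of_mem]
    rw [hcard, nsmul_eq_mul, mul_one] at h
    calc S ≤ ((d-1 : ℕ) : ℝ) := h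
    _ = (d:ℝ) - 1 := by push_cast [hd1]; ring
  have hd2 : (2:ℝ) ≤ (d:ℝ) := by exact_mod_cast hd
  rw [piAlpha_apply, hsplit, abs_le]
  constructor
  · nlinarith [mul_nonneg h0 (sub_nonneg.2 hαi.2.le), mul_nonneg (sub_nonneg.2 hSle) hαi.1.le]
  · nlinarith [mul_nonneg (sub_nonneg.2 h1) (sub_nonneg.2 hαi.2.le), mul_nonneg hS0 hαi.1.le]

theorem central_point_coordinate_intervals_and_sup {d : ℕ} (hd : 2 ≤ d)
    (α : Fin d → ℝ) (hα : ∀ i, α i ∈ Set.Ioo (0:ℝ) 1) (hsum : ∑ i, α i = 1)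
    (x₀ : Fin d → ℝ) (hx₀ : x₀ = fun i => (1 - (d:ℝ) * α i) / 2) :
    (∀ i : Fin d,
      (fun y : Fin d → ℝ => y i - x₀ i) '' (piAlpha α '' Set.Icc (0 : Fin d → ℝ) 1)
        = Set.Icc (-((1 + ((d:ℝ) - 2) * α i) / 2)) ((1 + ((d:ℝ) - 2) * α i) / 2))
    ∧ sSup ((fun y : Fin d → ℝ => ‖y - x₀‖) '' (piAlpha α '' Set.Icc (0 : Fin d → ℝ) 1))
        = (1 + ((d:ℝ) - 2) * ‖α‖) / 2 := by
  have hd2 : (2:ℝ) ≤ (d:ℝ) := by exact_mod_cast hd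
  have hx₀i : ∀ i, x₀ i = (1 - (d:ℝ) * α i) / 2 := by intro i; rw [hx₀]
  have part1 : ∀ i : Fin d,
      (fun y : Fin d → ℝ => y i - x₀ i) '' (piAlpha α '' Set.Icc (0 : Fin d → ℝ) 1)
        = Set.Icc (-((1 + ((d:ℝ) - 2) * α i) / 2)) ((1 + ((d:ℝ) - 2) * α i) / 2) := by
    intro i
    ext t
    simp only [Set.mem_image, Set.mem_Icc]
    constructor
    · rintro ⟨z, ⟨y, hy, rfl⟩, rfl⟩
      have h := coord_bound hd α hα y hy i
      rw [abs_le] at h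
      rw [hx₀i i]
      exact ⟨by linarith [h.1], by linarith [h.2]⟩
    · intro ht
      set M := (1 + ((d:ℝ) - 2) * α i) / 2 with hM
      have hM0 : 0 < M := by nlinarith [(hα i).1]
      set s := (t + M) / (2 * M) with hs
      have hs0 : 0 ≤ s := div_nonneg (by linarith [ht.1]) (by linarith)
      have hs1 : s ≤ 1 := by
        rw [div_le_one (by linarith)]; linarith [ht.2]
      refine ⟨piAlpha α (fun j => if j = i then s else 1 - s),
        ⟨fun j => if j = i then s else 1 - s, ?_, rfl⟩, ?_⟩
      · constructor <;> intro j <;> simp only [Pi.zero_apply, Pi.one_apply] <;> split <;> linarith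
      · have hsumy : ∑ j, (if j = i then s else 1 - s) = (d:ℝ)*(1-s) + (2*s-1) := by
          have h1 : ∀ j : Fin d, (if j = i then s else 1 - s)
              = (1 - s) + (if j = i then (2*s-1) else 0) := by
            intro j; split <;> ring
          simp_rw [h1, Finset.sum_add_distrib]
          simp [Finset.sum_ite_eq', mul_comm]; ring
        rw [piAlpha_apply, hsumy, hx₀i i]
        simp only [if_pos rfl, if_true]
        have key : s - ((d:ℝ)*(1-s) + (2*s-1)) * α i - (1 - (d:ℝ)*α i)/2 = -M + 2*M*s := by
          rw [hM]; ring
        rw [key, hs]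
        have hMne : M ≠ 0 := hM0.ne'
        field_simp
        ring
  refine ⟨part1, ?_⟩
  have hdpos : 0 < d := lt_of_lt_of_le (by norm_num) hd
  haveI : Nonempty (Fin d) := ⟨⟨0, hdpos⟩⟩
  obtain ⟨i₀, -, hmax⟩ := Finset.exists_max_image Finset.univ α
    ⟨Classical.arbitrary (Fin d), Finset.mem_univ _⟩
  have hnorm : ‖α‖ = α i₀ := by
    apply le_antisymm
    · refine (pi_norm_le_iff_of_nonneg ((hα i₀).1.le)).2 fun j => ?_
      rw [Real.norm_eq_abs, abs_of_pos (hα j).1]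
      exact hmax j (Finset.mem_univ j)
    · calc α i₀ ≤ |α i₀| := le_abs_self _
        _ ≤ ‖α‖ := norm_le_pi_norm α i₀
  set M := (1 + ((d:ℝ)-2) * ‖α‖)/2 with hMdef
  have hM0 : 0 < M := by nlinarith [(hα i₀).1, hnorm]
  have hub : ∀ r ∈ (fun y : Fin d → ℝ => ‖y - x₀‖) '' (piAlpha α '' Set.Icc (0:Fin d → ℝ) 1),
      r ≤ M := by
    rintro r ⟨z, ⟨y, hy, rfl⟩, rfl⟩
    refine (pi_norm_le_iff_of_nonneg hM0.le).2 fun j => ?_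
    rw [Pi.sub_apply, Real.norm_eq_abs, hx₀i j]
    have h := coord_bound hd α hα y hy j
    have hj : α j ≤ ‖α‖ := by rw [hnorm]; exact hmax j (Finset.mem_univ j)
    calc |piAlpha α y j - (1 - (d:ℝ)*α j)/2| ≤ (1 + ((d:ℝ)-2)*α j)/2 := h
      _ ≤ M := by rw [hMdef]; nlinarith
  have hmem : M ∈ (fun y : Fin d → ℝ => ‖y - x₀‖) '' (piAlpha α '' Set.Icc (0:Fin d → ℝ) 1) := by
    have h1 := part1 i₀
    have hMeq : (1 + ((d:ℝ)-2)*α i₀)/2 = M := by rw [hMdef, hnorm]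
    have hMmem : M ∈ Set.Icc (-((1 + ((d:ℝ) - 2) * α i₀) / 2)) ((1 + ((d:ℝ) - 2) * α i₀) / 2) := by
      rw [hMeq]; exact ⟨by linarith, le_refl M⟩
    rw [← h1] at hMmem
    obtain ⟨z, hz, hzM⟩ := hMmem
    refine ⟨z, hz, le_antisymm (hub _ ⟨z, hz, rfl⟩) ?_⟩
    have hz' : z i₀ - x₀ i₀ = M := hzM
    calc M = |z i₀ - x₀ i₀| := by rw [hz', abs_of_pos hM0]
      _ ≤ ‖z - x₀‖ := by
        have := norm_le_pi_norm (z - x₀) i₀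
        simpa [Real.norm_eq_abs] using this
  exact le_antisymm (csSup_le ⟨M, hmem⟩ hub) (le_csSup ⟨M, hub⟩ hmem)
end

section
/- Let (X,T) be a minimal topological dynamical system on a compact metric space X, let W_1, …, W_k be closed subsets covering X with pairwise disjoint interiors, and let F = ∪_i ∂W_i. For n ∈ ℕ let 𝓕_n be the set of connected components of X \ ∪_{j=0}^n T^{−j}(F). If x, y lie in the same element of 𝓕_n, then for every j ∈ {0,…,n}, the points T^j(x) and T^j(y) lie in the interior of the same set W_i. Consequently, if u codes the orbit of a point x₀ with T^n(x₀) ∈ int(W_{u_n}) for all n, then the factor complexity satisfies p_u(n+1) ≤ card 𝓕_n. -/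
open Set Function

private def iterHomeo {X : Type*} [TopologicalSpace X] (T : X ≃ₜ X) : ℕ → X ≃ₜ X
  | 0 => Homeomorph.refl X
  | j + 1 => (iterHomeo T j).trans T

private lemma iterHomeo_coe {X : Type*} [TopologicalSpace X] (T : X ≃ₜ X) (j : ℕ) :
    ⇑(iterHomeo T j) = (⇑T)^[j] := by
  induction j with
  | zero => rfl
  | succ j ih =>
    ext x
    simp [iterHomeo, Homeomorph.trans_apply, ih, Function.iterate_succ_apply']

theorem coding_complexity_le_card_components {X : Type*} [MetricSpace X] [CompactSpace X]
    (T : X ≃ₜ X)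
    (hmin : ∀ A : Set X, IsClosed A → (T : X → X) '' A = A → A = ∅ ∨ A = Set.univ)
    {k : ℕ} (W : Fin k → Set X)
    (hWclosed : ∀ i, IsClosed (W i))
    (hWcover : (⋃ i, W i) = Set.univ)
    (hWdisj : ∀ i j, i ≠ j → Disjoint (interior (W i)) (interior (W j)))
    (F : Set X) (hF : F = ⋃ i, frontier (W i))
    (S : ℕ → Set X) (hS : ∀ n : ℕ, S n = {z : X | ∀ j ≤ n, (⇑T)^[j] z ∉ F})
    (hpath : ∀ n : ℕ, ∀ z ∈ S n, IsPathConnected (connectedComponentIn (S n) z)) :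
    (∀ n : ℕ, ∀ x ∈ S n, ∀ y ∈ connectedComponentIn (S n) x, ∀ j ≤ n,
        ∃ i : Fin k, (⇑T)^[j] x ∈ interior (W i) ∧ (⇑T)^[j] y ∈ interior (W i))
    ∧ (∀ (x₀ : X) (u : ℕ → Fin k), (∀ n : ℕ, (⇑T)^[n] x₀ ∈ interior (W (u n))) →
        ∀ n : ℕ,
          {w : Fin (n + 1) → Fin k | ∃ s : ℕ, ∀ t : Fin (n + 1), w t = u (s + t.1)}.encard
            ≤ {Cc : Set X | ∃ z ∈ S n, Cc = connectedComponentIn (S n) z}.encard) := by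
  classical
  -- every point outside F lies in the interior of some W i
  have hmemint : ∀ z : X, z ∉ F → ∃ i, z ∈ interior (W i) := by
    intro z hz
    have hz' : z ∈ ⋃ i, W i := hWcover ▸ mem_univ z
    obtain ⟨i, hi⟩ := mem_iUnion.1 hz'
    refine ⟨i, ?_⟩
    have hfr : z ∉ frontier (W i) := fun h => hz (hF ▸ mem_iUnion.2 ⟨i, h⟩)
    rw [(hWclosed i).frontier_eq] at hfr
    simp only [mem_diff, not_and, not_not] at hfr
    exact hfr hi
  have hint_unique : ∀ (a : X) (i i' : Fin k),
      a ∈ interior (W i) → a ∈ interior (W i') → i = i' := by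
    intro a i i' h h'
    by_contra hne
    exact Set.disjoint_left.1 (hWdisj i i' hne) h h'
  -- main statement (first conjunct)
  have main : ∀ n : ℕ, ∀ x ∈ S n, ∀ y ∈ connectedComponentIn (S n) x, ∀ j ≤ n,
      ∃ i : Fin k, (⇑T)^[j] x ∈ interior (W i) ∧ (⇑T)^[j] y ∈ interior (W i) := by
    intro n x hx y hy j hj
    have hx' : ∀ j' ≤ n, (⇑T)^[j'] x ∉ F := by rw [hS n] at hx; exact hx
    obtain ⟨i, hi⟩ := hmemint _ (hx' j hj)
    set C := connectedComponentIn (S n) x with hC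
    have hCsub : C ⊆ S n := connectedComponentIn_subset _ _
    have hconn : IsPreconnected ((⇑T)^[j] '' C) :=
      isPreconnected_connectedComponentIn.image _ ((T.continuous.iterate j).continuousOn)
    have hcover : (⇑T)^[j] '' C ⊆
        interior (W i) ∪ ⋃ i' : {i' : Fin k // i' ≠ i}, interior (W i'.1) := by
      rintro _ ⟨z, hz, rfl⟩
      have hz' : ∀ j' ≤ n, (⇑T)^[j'] z ∉ F := by
        have := hCsub hz; rw [hS n] at this; exact this
      obtain ⟨i'', h''⟩ := hmemint _ (hz' j hj)
      by_cases h : i'' = i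
      · exact Or.inl (h ▸ h'')
      · exact Or.inr (mem_iUnion.2 ⟨⟨i'', h⟩, h''⟩)
    have hdisj : Disjoint (interior (W i))
        (⋃ i' : {i' : Fin k // i' ≠ i}, interior (W i'.1)) := by
      simp only [disjoint_iUnion_right]
      exact fun i' => hWdisj i i'.1 (Ne.symm i'.2)
    have hopen2 : IsOpen (⋃ i' : {i' : Fin k // i' ≠ i}, interior (W i'.1)) :=
      isOpen_iUnion fun _ => isOpen_interior
    have hne : (((⇑T)^[j] '' C) ∩ interior (W i)).Nonempty :=
      ⟨(⇑T)^[j] x, ⟨x, mem_connectedComponentIn hx, rfl⟩, hi⟩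
    have hsub : (⇑T)^[j] '' C ⊆ interior (W i) :=
      hconn.subset_left_of_subset_union isOpen_interior hopen2 hdisj hcover hne
    exact ⟨i, hi, hsub ⟨y, hy, rfl⟩⟩
  refine ⟨main, ?_⟩
  intro x₀ u hu n
  -- density of S n
  have hdense : Dense (S n) := by
    have hDd : Dense (⋂ p : Fin (n + 1) × Fin k,
        (⇑T)^[p.1.1] ⁻¹' (frontier (W p.2))ᶜ) := by
      apply dense_iInter_of_isOpen
      · intro p
        exact (isClosed_frontier.isOpen_compl).preimage (T.continuous.iterate _)
      · intro p
        have h1 : Dense ((frontier (W p.2))ᶜ) :=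
          interior_eq_empty_iff_dense_compl.1 (interior_frontier (hWclosed p.2))
        have h2 : Dense ((iterHomeo T p.1.1) ⁻¹' (frontier (W p.2))ᶜ) := by
          rw [dense_iff_closure_eq, ← Homeomorph.preimage_closure,
            dense_iff_closure_eq.1 h1, preimage_univ]
        rwa [iterHomeo_coe] at h2
    refine Dense.mono ?_ hDd
    intro z hz
    rw [hS n]
    intro j hj hfz
    rw [hF, mem_iUnion] at hfz
    obtain ⟨i, hi⟩ := hfz
    exact (mem_iInter.1 hz (⟨j, Nat.lt_succ_of_le hj⟩, i)) hi
  set Fac := {w : Fin (n + 1) → Fin k | ∃ s : ℕ, ∀ t : Fin (n + 1), w t = u (s + t.1)}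
    with hFac
  set U : (Fin (n + 1) → Fin k) → Set X :=
    fun w => ⋂ t : Fin (n + 1), (⇑T)^[t.1] ⁻¹' interior (W (w t)) with hU
  have hUS : ∀ w ∈ Fac, (U w ∩ S n).Nonempty := by
    rintro w ⟨s, hws⟩
    apply hdense.inter_open_nonempty
    · exact isOpen_iInter_of_finite fun t =>
        isOpen_interior.preimage (T.continuous.iterate _)
    · refine ⟨(⇑T)^[s] x₀, mem_iInter.2 fun t => ?_⟩
      have : (⇑T)^[t.1] ((⇑T)^[s] x₀) = (⇑T)^[s + t.1] x₀ := by
        rw [add_comm s t.1]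
        exact (Function.iterate_add_apply _ _ _ _).symm
      simp only [mem_preimage, this, hws t]
      exact hu (s + t.1)
  set f : (Fin (n + 1) → Fin k) → Set X := fun w =>
    if h : (U w ∩ S n).Nonempty then connectedComponentIn (S n) h.choose else ∅
    with hf
  have hfim : f '' Fac ⊆ {Cc : Set X | ∃ z ∈ S n, Cc = connectedComponentIn (S n) z} := by
    rintro _ ⟨w, hw, rfl⟩
    have h := hUS w hw
    refine ⟨h.choose, h.choose_spec.2, ?_⟩
    simp only [hf, dif_pos h]
  have hinj : Set.InjOn f Fac := by
    intro w hw w' hw' hww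
    have h := hUS w hw
    have h' := hUS w' hw'
    have hfw : f w = connectedComponentIn (S n) h.choose := by simp only [hf, dif_pos h]
    have hfw' : f w' = connectedComponentIn (S n) h'.choose := by simp only [hf, dif_pos h']
    have hzS : h.choose ∈ S n := h.choose_spec.2
    have hz'S : h'.choose ∈ S n := h'.choose_spec.2
    have hz'mem : h'.choose ∈ connectedComponentIn (S n) h.choose := by
      rw [← hfw, hww, hfw']
      exact mem_connectedComponentIn hz'S
    funext t
    obtain ⟨i, hiz, hiz'⟩ := main n h.choose hzS h'.choose hz'mem t.1
      (Nat.lt_succ_iff.1 t.2)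
    have hwz : (⇑T)^[t.1] h.choose ∈ interior (W (w t)) :=
      mem_iInter.1 h.choose_spec.1 t
    have hwz' : (⇑T)^[t.1] h'.choose ∈ interior (W (w' t)) :=
      mem_iInter.1 h'.choose_spec.1 t
    rw [hint_unique _ _ _ hwz hiz, hint_unique _ _ _ hwz' hiz']
  calc Fac.encard = (f '' Fac).encard := (hinj.encard_image).symm
    _ ≤ _ := Set.encard_le_encard hfim
end
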